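/- arXiv:2307.13964 — 10 statements merged into one kernel-verified Lean document; each statement's English description precedes it below -/
import Mathlib

section
/- Let P be a finite nonempty poset and let G_P be its cover-incomparability graph. Then G_P is a connected graph. -/
open SimpleGraph

/-- The cover-incomparability graph of a poset `V`: distinct `u, v` are adjacent iff
`u` covers `v`, `v` covers `u`, or `u` and `v` are incomparable. -/
def ciGraph (V : Type*) [PartialOrder V] : SimpleGraph V where
  Adj u v := u ⋖ v ∨ v ⋖ u ∨ (¬ u ≤ v ∧ ¬ v ≤ u)
  symm := by
    constructor
    intro u v h
    rcases h with h | h | h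
    · exact Or.inr (Or.inl h)
    · exact Or.inl h
    · exact Or.inr (Or.inr ⟨h.2, h.1⟩)
  loopless := by
    constructor
    intro u h
    rcases h with h | h | h
    · exact h.ne rfl
    · exact h.ne rfl
    · exact h.1 le_rfl

/-- A graph is a C-I graph if it is isomorphic to the cover-incomparability graph
of some finite poset. -/
def IsCIGraph {W : Type u} (G : SimpleGraph W) : Prop :=
  ∃ (V : Type u) (inst : PartialOrder V) (_ : Finite V),
    Nonempty (G ≃g @ciGraph V inst)

/-- A vertex is simplicial if its neighborhood is a clique. -/
def IsSimplicialVertex {V : Type*} (G : SimpleGraph V) (v : V) : Prop :=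
  G.IsClique (G.neighborSet v)

/-- A graph is chordal if it has no induced cycle of length greater than 3. -/
def IsChordal {V : Type*} (G : SimpleGraph V) : Prop :=
  ∀ n : ℕ, 3 < n → IsEmpty (cycleGraph n ↪g G)

/-- A cograph: no induced path on four vertices. -/
def IsCograph {V : Type*} (G : SimpleGraph V) : Prop :=
  ¬ ∃ a b c d : V, a ≠ b ∧ a ≠ c ∧ a ≠ d ∧ b ≠ c ∧ b ≠ d ∧ c ≠ d ∧
    G.Adj a b ∧ G.Adj b c ∧ G.Adj c d ∧ ¬ G.Adj a c ∧ ¬ G.Adj a d ∧ ¬ G.Adj b d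

/-- `G` has exactly two independent simplicial vertices. -/
def HasExactlyTwoIndepSimplicial {V : Type*} (G : SimpleGraph V) : Prop :=
  (∃ a b : V, a ≠ b ∧ ¬ G.Adj a b ∧ IsSimplicialVertex G a ∧ IsSimplicialVertex G b) ∧
  ¬ ∃ a b c : V, a ≠ b ∧ a ≠ c ∧ b ≠ c ∧ ¬ G.Adj a b ∧ ¬ G.Adj a c ∧ ¬ G.Adj b c ∧
    IsSimplicialVertex G a ∧ IsSimplicialVertex G b ∧ IsSimplicialVertex G c

/-- A complete graph: all distinct vertices adjacent. -/
def IsCompleteGraph {V : Type*} (G : SimpleGraph V) : Prop :=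
  ∀ u v : V, u ≠ v → G.Adj u v

/-- A maximal clique of `G`. -/
def IsMaxClique {V : Type*} (G : SimpleGraph V) (s : Set V) : Prop :=
  G.IsClique s ∧ ∀ t : Set V, G.IsClique t → s ⊆ t → t = s

lemma ciGraph_reachable_of_le {V : Type*} [PartialOrder V] [Finite V] :
    ∀ u v : V, u ≤ v → (ciGraph V).Reachable u v := by
  intro u
  induction u using WellFoundedGT.induction with
  | _ u ih =>
    intro v huv
    rcases eq_or_lt_of_le huv with rfl | hlt
    · exact SimpleGraph.Reachable.refl u
    · obtain ⟨c, hc, hcv⟩ := exists_covBy_le_of_lt hlt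
      have h1 : (ciGraph V).Adj u c := Or.inl hc
      exact (h1.reachable).trans (ih c hc.lt v hcv)

/-- The cover-incomparability graph of a finite nonempty poset is connected. -/
theorem ciGraph_connected (V : Type*) [PartialOrder V] [Finite V] [Nonempty V] :
    (ciGraph V).Connected := by
  rw [SimpleGraph.connected_iff]
  refine ⟨fun u v => ?_, ‹_›⟩
  by_cases h1 : u ≤ v
  · exact ciGraph_reachable_of_le u v h1
  by_cases h2 : v ≤ u
  · exact (ciGraph_reachable_of_le v u h2).symm
  · exact SimpleGraph.Adj.reachable (Or.inr (Or.inr ⟨h1, h2⟩))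
end

section
/- Let P be a finite poset and let G_P be its cover-incomparability graph. Then G_P contains no induced cycle of length greater than 4. -/
open SimpleGraph

/-- Nonadjacent distinct vertices in a C-I graph are strictly comparable. -/
lemma ciGraph_nonadj_lt {V : Type*} [PartialOrder V] {a b : V}
    (h : ¬ (ciGraph V).Adj a b) (hne : a ≠ b) : a < b ∨ b < a := by
  by_contra hc
  push_neg at hc
  exact h (Or.inr (Or.inr ⟨fun hle => hc.1 (lt_of_le_of_ne hle hne),
    fun hle => hc.2 (lt_of_le_of_ne hle hne.symm)⟩))

/-- If there is a strictly intermediate element, endpoints are nonadjacent. -/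
lemma ciGraph_not_adj_of_betw {V : Type*} [PartialOrder V] {a b c : V}
    (hac : a < c) (hcb : c < b) : ¬ (ciGraph V).Adj a b := by
  rintro (h | h | h)
  · exact h.2 hac hcb
  · exact (hac.trans hcb).asymm h.lt
  · exact h.1 (hac.trans hcb).le

/-- Adjacency in the cycle graph, for naturals `a < b < n`. -/
lemma cycleGraph_adj_mk {n a b : ℕ} (ha : a < n) (hb : b < n) (hab : a < b) :
    (cycleGraph n).Adj ⟨a, ha⟩ ⟨b, hb⟩ ↔ (b = a + 1 ∨ (a = 0 ∧ b = n - 1)) := by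
  rw [cycleGraph_adj']
  have h1 : ((⟨a, ha⟩ - ⟨b, hb⟩ : Fin n)).val = a + (n - b) := by
    rw [Fin.sub_def]
    show (n - b + a) % n = a + (n - b)
    rw [Nat.mod_eq_of_lt (by omega)]
    omega
  have h2 : ((⟨b, hb⟩ - ⟨a, ha⟩ : Fin n)).val = b - a := by
    rw [Fin.sub_def]
    show (n - a + b) % n = b - a
    have h' : n - a + b = (b - a) + n := by omega
    rw [h', Nat.add_mod_right, Nat.mod_eq_of_lt (by omega)]
  rw [h1, h2]
  omega

/-- The C-I graph of the order dual is isomorphic to the original C-I graph. -/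
def ciGraphDualIso (V : Type*) [PartialOrder V] : ciGraph V ≃g ciGraph Vᵒᵈ where
  toEquiv := OrderDual.toDual
  map_rel_iff' := by
    intro a b
    show (_ ⋖ _ ∨ _ ⋖ _ ∨ _) ↔ (_ ⋖ _ ∨ _ ⋖ _ ∨ _)
    constructor
    · rintro (h | h | ⟨h1, h2⟩)
      · exact Or.inr (Or.inl (toDual_covBy_toDual_iff.mp h))
      · exact Or.inl (toDual_covBy_toDual_iff.mp h)
      · exact Or.inr (Or.inr ⟨h2, h1⟩)
    · rintro (h | h | ⟨h1, h2⟩)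
      · exact Or.inr (Or.inl (toDual_covBy_toDual_iff.mpr h))
      · exact Or.inl (toDual_covBy_toDual_iff.mpr h)
      · exact Or.inr (Or.inr ⟨h2, h1⟩)

/-- Core lemma: an induced cycle of length `> 4` with `f 0 < f 2` is impossible. -/
lemma ciGraph_aux {V : Type*} [PartialOrder V] (n : ℕ) (hn : 4 < n)
    (f : cycleGraph n ↪g ciGraph V)
    (h02 : f ⟨0, by omega⟩ < f ⟨2, by omega⟩) : False := by
  -- images of adjacent cycle vertices are adjacent
  have hadj : ∀ a b (ha : a < n) (hb : b < n), a < b →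
      (b = a + 1 ∨ (a = 0 ∧ b = n - 1)) →
      (ciGraph V).Adj (f ⟨a, ha⟩) (f ⟨b, hb⟩) := by
    intro a b ha hb hab h
    exact f.map_adj_iff.mpr ((cycleGraph_adj_mk ha hb hab).mpr h)
  -- images of nonadjacent distinct cycle vertices are strictly comparable
  have hcomp : ∀ a b (ha : a < n) (hb : b < n), a < b → b ≠ a + 1 →
      ¬(a = 0 ∧ b = n - 1) →
      f ⟨a, ha⟩ < f ⟨b, hb⟩ ∨ f ⟨b, hb⟩ < f ⟨a, ha⟩ := by
    intro a b ha hb hab h1 h2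
    refine ciGraph_nonadj_lt (fun h => ?_) (fun h => ?_)
    · rcases (cycleGraph_adj_mk ha hb hab).mp (f.map_adj_iff.mp h) with h' | h'
      · exact h1 h'
      · exact h2 h'
    · have := f.injective h
      rw [Fin.mk.injEq] at this
      omega
  -- no strictly intermediate element between images of adjacent cycle vertices
  have hbetw : ∀ a b (ha : a < n) (hb : b < n), a < b →
      (b = a + 1 ∨ (a = 0 ∧ b = n - 1)) →
      ∀ c : V, f ⟨a, ha⟩ < c → c < f ⟨b, hb⟩ → False := by
    intro a b ha hb hab h c h1 h2
    exact ciGraph_not_adj_of_betw h1 h2 (hadj a b ha hb hab h)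
  have hbetw' : ∀ a b (ha : a < n) (hb : b < n), a < b →
      (b = a + 1 ∨ (a = 0 ∧ b = n - 1)) →
      ∀ c : V, f ⟨b, hb⟩ < c → c < f ⟨a, ha⟩ → False := by
    intro a b ha hb hab h c h1 h2
    exact ciGraph_not_adj_of_betw h1 h2 (hadj a b ha hb hab h).symm
  -- the chain: f 0 < f k for 2 ≤ k ≤ n - 2
  have chain : ∀ k, 2 ≤ k → ∀ hk : k < n - 1, f ⟨0, by omega⟩ < f ⟨k, by omega⟩ := by
    intro k h2
    induction k, h2 using Nat.le_induction with
    | base => intro _; exact h02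
    | succ k hk ih =>
      intro hkn
      have ihk := ih (by omega)
      rcases hcomp 0 (k + 1) (by omega) (by omega) (by omega) (by omega) (by omega) with h | h
      · exact h
      · exact absurd ihk (fun h' =>
          hbetw' k (k + 1) (by omega) (by omega) (by omega) (by omega) _ h h')
  have hN2 : f ⟨0, by omega⟩ < f ⟨n - 2, by omega⟩ := chain (n - 2) (by omega) (by omega)
  -- f (n-1) < f 2
  have hA : f ⟨n - 1, by omega⟩ < f ⟨2, by omega⟩ := by
    rcases hcomp 2 (n - 1) (by omega) (by omega) (by omega) (by omega) (by omega) with h | h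
    · exact absurd h (fun h' =>
        hbetw 0 (n - 1) (by omega) (by omega) (by omega) (by omega) _ h02 h')
    · exact h
  -- f (n-1) < f 1
  have hB : f ⟨n - 1, by omega⟩ < f ⟨1, by omega⟩ := by
    rcases hcomp 1 (n - 1) (by omega) (by omega) (by omega) (by omega) (by omega) with h | h
    · exact absurd hA (fun h' =>
        hbetw 1 2 (by omega) (by omega) (by omega) (by omega) _ h h')
    · exact h
  -- f 1 < f (n-2)
  have hC : f ⟨1, by omega⟩ < f ⟨n - 2, by omega⟩ := by
    rcases hcomp 1 (n - 2) (by omega) (by omega) (by omega) (by omega) (by omega) with h | h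
    · exact h
    · exact absurd h (fun h' =>
        hbetw 0 1 (by omega) (by omega) (by omega) (by omega) _ hN2 h')
  -- contradiction: f (n-1) < f 1 < f (n-2) but n-2, n-1 adjacent
  exact hbetw' (n - 2) (n - 1) (by omega) (by omega) (by omega) (by omega) _ hB hC

/-- The C-I graph of a finite poset contains no induced cycle of length
greater than 4. -/
theorem ciGraph_no_long_induced_cycle (V : Type*) [PartialOrder V] [Finite V]
    (n : ℕ) (hn : 4 < n) : IsEmpty (cycleGraph n ↪g ciGraph V) := by
  constructor
  intro f
  have h02 : f ⟨0, by omega⟩ < f ⟨2, by omega⟩ ∨ f ⟨2, by omega⟩ < f ⟨0, by omega⟩ := by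
    refine ciGraph_nonadj_lt (fun h => ?_) (fun h => ?_)
    · rcases (cycleGraph_adj_mk (by omega : (0:ℕ) < n) (by omega) (by omega)).mp
        (f.map_adj_iff.mp h) with h' | h' <;> omega
    · have := f.injective h
      rw [Fin.mk.injEq] at this
      omega
  rcases h02 with h | h
  · exact ciGraph_aux n hn f h
  · exact ciGraph_aux (V := Vᵒᵈ) n hn ((ciGraphDualIso V).toEmbedding.comp f)
      h
end

section
/- If G is a C-I graph, then G does not contain three pairwise non-adjacent simplicial vertices. -/
open SimpleGraph

section Aux

variable {V : Type*} [PartialOrder V] [Finite V]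

lemma aux_exists_covBy_right {a b : V} (h : a < b) (hnc : ¬ a ⋖ b) :
    ∃ z, a < z ∧ z ⋖ b := by
  obtain ⟨z0, hz0⟩ := exists_lt_lt_of_not_covBy h hnc
  obtain ⟨z, hzS, hmax⟩ := Set.Finite.exists_maximalFor id {z | a < z ∧ z < b}
    (Set.toFinite _) ⟨z0, hz0⟩
  refine ⟨z, hzS.1, hzS.2, fun {y} hzy hyb => ?_⟩
  exact hzy.not_ge (hmax ⟨hzS.1.trans hzy, hyb⟩ hzy.le)

lemma aux_exists_covBy_left {a b : V} (h : a < b) (hnc : ¬ a ⋖ b) :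
    ∃ z, a ⋖ z ∧ z < b := by
  obtain ⟨z0, hz0⟩ := exists_lt_lt_of_not_covBy h hnc
  obtain ⟨z, hzS, hmin⟩ := Set.Finite.exists_minimalFor id {z | a < z ∧ z < b}
    (Set.toFinite _) ⟨z0, hz0⟩
  refine ⟨z, ⟨hzS.1, fun {y} hay hyz => ?_⟩, hzS.2⟩
  exact hyz.not_ge (hmin ⟨hay, hyz.trans hzS.2⟩ hyz.le)

lemma aux_middle {a b c : V} (hab : a < b) (hbc : b < c)
    (hnab : ¬ a ⋖ b) (hnbc : ¬ b ⋖ c)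
    (hs : IsSimplicialVertex (ciGraph V) b) : False := by
  obtain ⟨z, haz, hzb⟩ := aux_exists_covBy_right hab hnab
  obtain ⟨w, hbw, hwc⟩ := aux_exists_covBy_left hbc hnbc
  have hzmem : z ∈ (ciGraph V).neighborSet b := Or.inr (Or.inl hzb)
  have hwmem : w ∈ (ciGraph V).neighborSet b := Or.inl hbw
  have hzw : z < w := hzb.lt.trans hbw.lt
  have hadj : (ciGraph V).Adj z w := hs hzmem hwmem hzw.ne
  rcases hadj with h | h | h
  · exact h.2 hzb.lt hbw.lt
  · exact absurd hzw.le (h.lt : w < z).not_ge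
  · exact h.1 hzw.le

lemma aux_not_adj {a b : V} (hne : a ≠ b) (h : ¬ (ciGraph V).Adj a b) :
    (a < b ∨ b < a) ∧ ¬ a ⋖ b ∧ ¬ b ⋖ a := by
  have h' : ¬ (a ⋖ b ∨ b ⋖ a ∨ (¬ a ≤ b ∧ ¬ b ≤ a)) := h
  refine ⟨?_, fun hc => h' (Or.inl hc), fun hc => h' (Or.inr (Or.inl hc))⟩
  by_cases h4 : a ≤ b
  · exact Or.inl (h4.lt_of_ne hne)
  · have h5 : b ≤ a := by
      by_contra h5
      exact h' (Or.inr (Or.inr ⟨h4, h5⟩))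
    exact Or.inr (h5.lt_of_ne hne.symm)

lemma aux_key : ¬ ∃ a b c : V, a ≠ b ∧ a ≠ c ∧ b ≠ c ∧
    ¬ (ciGraph V).Adj a b ∧ ¬ (ciGraph V).Adj a c ∧ ¬ (ciGraph V).Adj b c ∧
    IsSimplicialVertex (ciGraph V) a ∧ IsSimplicialVertex (ciGraph V) b ∧
    IsSimplicialVertex (ciGraph V) c := by
  rintro ⟨a, b, c, hab, hac, hbc, nab, nac, nbc, sa, sb, sc⟩
  obtain ⟨oab, cab, cba⟩ := aux_not_adj hab nab
  obtain ⟨oac, cac, cca⟩ := aux_not_adj hac nac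
  obtain ⟨obc, cbc, ccb⟩ := aux_not_adj hbc nbc
  rcases oab with h1 | h1
  · rcases obc with h2 | h2
    · exact aux_middle h1 h2 cab cbc sb
    · rcases oac with h3 | h3
      · exact aux_middle h3 h2 cac ccb sc
      · exact aux_middle h3 h1 cca cab sa
  · rcases obc with h2 | h2
    · rcases oac with h3 | h3
      · exact aux_middle h1 h3 cba cac sa
      · exact aux_middle h2 h3 cbc cca sc
    · exact aux_middle h2 h1 ccb cba sb

end Aux

/-- A C-I graph does not contain three pairwise non-adjacent simplicial
vertices. -/
theorem ciGraph_no_three_indep_simplicial {W : Type u} (G : SimpleGraph W)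
    (hG : IsCIGraph G) :
    ¬ ∃ a b c : W, a ≠ b ∧ a ≠ c ∧ b ≠ c ∧ ¬ G.Adj a b ∧ ¬ G.Adj a c ∧ ¬ G.Adj b c ∧
      IsSimplicialVertex G a ∧ IsSimplicialVertex G b ∧ IsSimplicialVertex G c := by
  
  obtain ⟨V, inst, fin, ⟨e⟩⟩ := hG
  rintro ⟨a, b, c, hab, hac, hbc, nab, nac, nbc, sa, sb, sc⟩
  letI := inst
  letI := fin
  have hsimp : ∀ v : W, IsSimplicialVertex G v → IsSimplicialVertex (ciGraph V) (e v) := by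
    intro v hv x hx y hy hxy
    have hx' : G.Adj v (e.symm x) := by
      have := e.symm.map_adj_iff.mpr hx
      simpa using this
    have hy' : G.Adj v (e.symm y) := by
      have := e.symm.map_adj_iff.mpr hy
      simpa using this
    have hne : e.symm x ≠ e.symm y := fun h => hxy (by
      have := congrArg e h
      simpa using this)
    have := hv hx' hy' hne
    have := e.map_adj_iff.mpr this
    simpa using this
  refine aux_key ⟨e a, e b, e c, ?_, ?_, ?_, ?_, ?_, ?_, hsimp a sa, hsimp b sb, hsimp c sc⟩
  · exact fun h => hab (e.injective h)
  · exact fun h => hac (e.injective h)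
  · exact fun h => hbc (e.injective h)
  · exact fun h => nab (e.map_adj_iff.mp h)
  · exact fun h => nac (e.map_adj_iff.mp h)
  · exact fun h => nbc (e.map_adj_iff.mp h)
end

section
/- Let P be a finite poset and let G_P be its cover-incomparability graph. If v is a simplicial vertex of G_P, then v is a maximal element or a minimal element of P. -/
open SimpleGraph

/-- A simplicial vertex of the C-I graph of a finite poset is a maximal
or a minimal element of the poset. -/
theorem simplicial_isMax_or_isMin (V : Type*) [PartialOrder V] [Finite V] (v : V)
    (hv : IsSimplicialVertex (ciGraph V) v) : IsMax v ∨ IsMin v := by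
  by_contra hc
  push_neg at hc
  obtain ⟨hmax, hmin⟩ := hc
  simp only [IsMax, IsMin, not_forall] at hmax hmin
  obtain ⟨a', hva', hna⟩ := hmax
  obtain ⟨b', hb'v, hnb⟩ := hmin
  have hva : v < a' := lt_of_le_of_ne hva' (fun h => hna (h ▸ le_rfl))
  have hbv : b' < v := lt_of_le_of_ne hb'v (fun h => hnb (h ▸ le_rfl))
  obtain ⟨a, hca, -⟩ := exists_covBy_le_of_lt hva
  obtain ⟨b, -, hcb⟩ := exists_le_covBy_of_lt hbv
  have hav : (ciGraph V).Adj v a := Or.inl hca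
  have hbvadj : (ciGraph V).Adj v b := Or.inr (Or.inl hcb)
  have hab : a ≠ b := fun h => absurd (h ▸ hca.lt) (asymm hcb.lt)
  have := hv (by exact hav) (by exact hbvadj) hab
  rcases this with h | h | h
  · exact absurd h.lt (asymm (hcb.lt.trans hca.lt))
  · exact h.2 hcb.lt hca.lt
  · exact h.2 (hcb.le.trans hca.le)
end

section
/- Let G = (V, E) be the C-I graph of a finite poset P and let v ∈ V be a minimal or maximal element of P. Then the induced subgraph G \ v obtained by deleting v from G is also a C-I graph. -/
open SimpleGraph

lemma covBy_subtype_iff_of_extremal {V : Type*} [PartialOrder V] {v : V}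
    (hv : IsMin v ∨ IsMax v) (a b : ↥({v}ᶜ : Set V)) :
    a ⋖ b ↔ (a : V) ⋖ (b : V) := by
  constructor
  · rintro ⟨hlt, hmax⟩
    refine ⟨Subtype.coe_lt_coe.mpr hlt, ?_⟩
    intro z hz hz'
    by_cases hzv : z = v
    · subst hzv
      rcases hv with h | h
      · exact lt_irrefl _ (lt_of_lt_of_le hz (h (le_of_lt hz)))
      · exact lt_irrefl _ (lt_of_lt_of_le hz' (h (le_of_lt hz')))
    · exact hmax (c := ⟨z, Set.mem_compl_singleton_iff.mpr hzv⟩)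
        (Subtype.coe_lt_coe.mp hz) (Subtype.coe_lt_coe.mp hz')
  · rintro ⟨hlt, hmax⟩
    exact ⟨Subtype.coe_lt_coe.mp hlt,
      fun c hc hc' => hmax (Subtype.coe_lt_coe.mpr hc) (Subtype.coe_lt_coe.mpr hc')⟩

/-- Deleting a minimal or maximal element of the poset from its C-I graph
again yields a C-I graph. -/
theorem ciGraph_delete_extremal (V : Type*) [PartialOrder V] [Finite V] (v : V)
    (hv : IsMin v ∨ IsMax v) :
    IsCIGraph ((ciGraph V).induce {v}ᶜ) := by
  refine ⟨↥({v}ᶜ : Set V), inferInstance, inferInstance,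
    ⟨⟨Equiv.refl _, fun {a b} => ?_⟩⟩⟩
  show (ciGraph ↥({v}ᶜ : Set V)).Adj _ _ ↔ ((ciGraph V).induce {v}ᶜ).Adj a b
  simp only [Equiv.refl_apply]
  show _ ∨ _ ∨ _ ↔ (ciGraph V).Adj (a : V) (b : V)
  rw [covBy_subtype_iff_of_extremal hv, covBy_subtype_iff_of_extremal hv]
  show _ ↔ _ ∨ _ ∨ _
  rw [Subtype.coe_le_coe, Subtype.coe_le_coe]
end

section
/- Let G be a chordal C-I graph and v a simplicial vertex of G. If G has exactly two independent simplicial vertices, then either G \ v is a chordal C-I graph having exactly two independent simplicial vertices, or G \ v is a complete graph. -/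
open SimpleGraph

section Auxiliary

open SimpleGraph

universe v

/-! ### Generic graph lemmas -/

lemma aux_chordal_induce {V : Type v} {G : SimpleGraph V}
    (hG : IsChordal G) (s : Set V) : IsChordal (G.induce s) := by
  intro n hn
  constructor
  intro f
  exact (hG n hn).false ((SimpleGraph.Embedding.induce s).comp f)

lemma aux_no_c4 {V : Type v} {G : SimpleGraph V}
    (hG : IsChordal G) {a b c d : V}
    (hab : G.Adj a b) (hbc : G.Adj b c) (hcd : G.Adj c d) (hda : G.Adj d a)
    (hac : ¬ G.Adj a c) (hbd : ¬ G.Adj b d) (hac' : a ≠ c) (hbd' : b ≠ d) : False := by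
  have h4 := hG 4 (by norm_num)
  have hca : ¬ G.Adj c a := fun h => hac h.symm
  have hdb : ¬ G.Adj d b := fun h => hbd h.symm
  have hca' : c ≠ a := fun h => hac' h.symm
  have hdb' : d ≠ b := fun h => hbd' h.symm
  refine h4.false ⟨⟨![a,b,c,d], ?_⟩, @fun i j => ?_⟩
  · intro i j hij
    fin_cases i <;> fin_cases j <;> simp_all [hab.ne, hbc.ne, hcd.ne, hda.ne, hab.ne',
      hbc.ne', hcd.ne', hda.ne']
  · change G.Adj (![a,b,c,d] i) (![a,b,c,d] j) ↔ _
    fin_cases i <;> fin_cases j <;>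
      simp [cycleGraph_adj, hab, hbc, hcd, hda, hac, hbd, hca, hdb, hab.symm, hbc.symm,
        hcd.symm, hda.symm, G.irrefl] <;> decide

lemma aux_simplicial_of_induce {V : Type v} {G : SimpleGraph V} {v : V}
    (x' : ↥({v}ᶜ : Set V)) (hnadj : ¬ G.Adj v ↑x')
    (hs : IsSimplicialVertex (G.induce {v}ᶜ) x') :
    IsSimplicialVertex G ↑x' := by
  intro s hs' t ht' hst
  have hsv : s ≠ v := by
    rintro rfl
    exact hnadj ((G.mem_neighborSet _ _).mp hs').symm
  have htv : t ≠ v := by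
    rintro rfl
    exact hnadj ((G.mem_neighborSet _ _).mp ht').symm
  have hs2 : (⟨s, hsv⟩ : ↥({v}ᶜ : Set V)) ∈ (G.induce {v}ᶜ).neighborSet x' := hs'
  have ht2 : (⟨t, htv⟩ : ↥({v}ᶜ : Set V)) ∈ (G.induce {v}ᶜ).neighborSet x' := ht'
  exact hs hs2 ht2 (fun h => hst (congrArg Subtype.val h))

lemma aux_simplicial_map {V : Type v} {W : Type*} {G : SimpleGraph V} {H : SimpleGraph W}
    (e : G ≃g H) {x : V} (hx : IsSimplicialVertex G x) :
    IsSimplicialVertex H (e x) := by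
  intro s hs t ht hst
  have hs' : G.Adj x (e.symm s) := by
    have h1 : H.Adj (e x) s := hs
    have := e.symm.map_rel_iff.mpr h1
    simpa using this
  have ht' : G.Adj x (e.symm t) := by
    have h1 : H.Adj (e x) t := ht
    have := e.symm.map_rel_iff.mpr h1
    simpa using this
  have hne : e.symm s ≠ e.symm t := fun h => hst (by
    have := congrArg e h
    simpa using this)
  have := hx hs' ht' hne
  have h2 := e.map_rel_iff.mpr this
  simpa using h2

/-- transfer an isomorphism to complements of singletons -/
noncomputable def aux_isoInduceCompl {V : Type v} {W : Type*} {G : SimpleGraph V}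
    {H : SimpleGraph W} (e : G ≃g H) (v : V) :
    G.induce {v}ᶜ ≃g H.induce {e v}ᶜ where
  toEquiv := e.toEquiv.subtypeEquiv (fun x => by
    simp only [Set.mem_compl_iff, Set.mem_singleton_iff]
    constructor
    · intro h h'
      exact h (e.toEquiv.injective h')
    · intro h h'
      exact h (congrArg e h'))
  map_rel_iff' := by
    intro a b
    simp only [Equiv.subtypeEquiv_apply, comap_adj, Function.Embedding.coe_subtype]
    exact e.map_rel_iff

end Auxiliary
section CIAux

open SimpleGraph

universe v

variable {P : Type v} [PartialOrder P]

lemma aux_ciGraph_adj {a b : P} :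
    (ciGraph P).Adj a b ↔ (a ⋖ b ∨ b ⋖ a ∨ (¬ a ≤ b ∧ ¬ b ≤ a)) := Iff.rfl

lemma aux_ciGraph_not_adj {a b : P} (h : ¬ (ciGraph P).Adj a b) (hne : a ≠ b) :
    (a < b ∨ b < a) ∧ ¬ a ⋖ b ∧ ¬ b ⋖ a := by
  rw [aux_ciGraph_adj] at h
  push_neg at h
  obtain ⟨h1, h2, h3⟩ := h
  refine ⟨?_, h1, h2⟩
  by_cases hle : a ≤ b
  · exact Or.inl (hle.lt_of_ne hne)
  · exact Or.inr ((h3 hle).lt_of_ne (Ne.symm hne))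

lemma aux_ciGraph_adj_of_lt {a b : P} (hlt : a < b) (h : (ciGraph P).Adj a b) : a ⋖ b := by
  rcases h with h | h | h
  · exact h
  · exact (asymm hlt h.lt).elim
  · exact (h.1 hlt.le).elim

lemma aux_deg_step [Finite P] (hch : IsChordal (ciGraph P))
    {y a b z : P} (hymax : ∀ w, y ≤ w → w = y) (hzmax : ∀ w, z ≤ w → w = z)
    (hya : (ciGraph P).Adj y a) (hyb : (ciGraph P).Adj y b)
    (hab : a < b) (hnab : ¬ (ciGraph P).Adj a b) (hbz : b ≤ z) :
    ((ciGraph P).neighborSet z).ncard < ((ciGraph P).neighborSet y).ncard := by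
  set G := ciGraph P with hGdef
  have hbny : ¬ b ≤ y := by
    intro hble
    have hblt : b < y := hble.lt_of_ne (fun h => G.ne_of_adj hyb h.symm)
    have hay : a < y := hab.trans hblt
    rcases hya with h | h | h
    · exact absurd (hymax a h.lt.le) h.lt.ne'
    · exact h.2 hab hblt
    · exact h.2 hay.le
  have hzny : z ≠ y := fun h => hbny (h ▸ hbz)
  have hzy : G.Adj z y := by
    refine Or.inr (Or.inr ⟨fun h => hbny (hbz.trans h), fun h => hzny (hymax z h)⟩)
  have hnaz : ¬ G.Adj z a ∧ a ≠ z := by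
    rcases lt_or_eq_of_le hbz with hblt | rfl
    · have haz : a < z := hab.trans hblt
      constructor
      · rintro (h | h | h)
        · exact h.lt.ne' (hzmax a h.lt.le)
        · exact h.2 hab hblt
        · exact h.2 haz.le
      · exact haz.ne
    · exact ⟨fun h => hnab (G.adj_symm h), hab.ne⟩
  have hincl : G.neighborSet z \ {y} ⊆ G.neighborSet y \ {a, z} := by
    rintro w ⟨hzw, hwy⟩
    simp only [Set.mem_singleton_iff] at hwy
    simp only [mem_neighborSet] at hzw ⊢
    have hwa : w ≠ a := fun h => hnaz.1 (h ▸ hzw)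
    have hadj : G.Adj y w := by
      by_contra hnyw
      have hcmp := aux_ciGraph_not_adj hnyw (Ne.symm hwy)
      have hwylt : w < y := by
        rcases hcmp.1 with h | h
        · exact absurd (hymax w h.le) h.ne'
        · exact h
      have hnwa : ¬ G.Adj w a := by
        intro hwadj
        exact aux_no_c4 hch (G.adj_symm hzw) hzy hya (G.adj_symm hwadj)
          (fun h => hnyw (G.adj_symm h)) hnaz.1 hwy (Ne.symm hnaz.2)
      have hcmp2 := aux_ciGraph_not_adj hnwa hwa
      rcases hcmp2.1 with hlt | hlt
      · have hwz : w < z := hlt.trans (hab.trans_le hbz)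
        rcases G.adj_symm hzw with h | h | h
        · exact h.2 hlt (hab.trans_le hbz)
        · exact h.lt.ne' (hzmax w h.lt.le)
        · exact h.1 hwz.le
      · rcases hya with h | h | h
        · exact h.lt.ne' (hymax a h.lt.le)
        · exact h.2 hlt hwylt
        · exact h.2 (hlt.trans hwylt).le
    refine ⟨hadj, ?_⟩
    simp only [Set.mem_insert_iff, Set.mem_singleton_iff]
    push_neg
    exact ⟨hwa, fun h => G.loopless.irrefl z (h ▸ hzw)⟩
  have hyz : y ∈ G.neighborSet z := hzy
  have h1 : (G.neighborSet z \ {y}).ncard + 1 = (G.neighborSet z).ncard :=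
    Set.ncard_diff_singleton_add_one hyz (Set.toFinite _)
  have haNy : a ∈ G.neighborSet y := hya
  have hzNy : z ∈ G.neighborSet y := G.adj_symm hzy
  have hins : insert a (insert z (G.neighborSet z \ {y})) ⊆ G.neighborSet y := by
    rintro w (rfl | rfl | hw)
    · exact haNy
    · exact hzNy
    · exact (hincl hw).1
  have hanm : a ∉ insert z (G.neighborSet z \ {y}) := by
    rintro (rfl | hw)
    · exact hnaz.2 rfl
    · exact hnaz.1 hw.1
  have hznm : z ∉ G.neighborSet z \ {y} := fun hw => G.loopless.irrefl z hw.1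
  have h2 : (insert a (insert z (G.neighborSet z \ {y}))).ncard
      = (G.neighborSet z \ {y}).ncard + 2 := by
    rw [Set.ncard_insert_of_notMem hanm (Set.toFinite _),
        Set.ncard_insert_of_notMem hznm (Set.toFinite _)]
  have h3 := Set.ncard_le_ncard hins (Set.toFinite _)
  omega

lemma aux_exists_simplicial [Finite P] [Nonempty P] (hch : IsChordal (ciGraph P)) :
    ∃ y : P, IsSimplicialVertex (ciGraph P) y := by
  classical
  set M : Set P := {y | ∀ w, y ≤ w → w = y} with hMdef
  have hMne : M.Nonempty := by
    obtain ⟨y, -, hy⟩ := Set.Finite.exists_maximalFor id Set.univ (Set.toFinite _)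
      ⟨Classical.arbitrary P, trivial⟩
    exact ⟨y, fun w hw => le_antisymm (hy trivial hw) hw⟩
  obtain ⟨y, hyM, hymin⟩ := Set.Finite.exists_minimalFor
    (fun y => ((ciGraph P).neighborSet y).ncard) M (Set.toFinite _) hMne
  refine ⟨y, ?_⟩
  intro s hs t ht hst
  by_contra hnadj
  -- s, t comparable; wlog get an ordered pair
  have key : ∀ a b : P, (ciGraph P).Adj y a → (ciGraph P).Adj y b → a < b → ¬ (ciGraph P).Adj a b → False := by
    intro a b hya hyb hab hnab
    obtain ⟨z, hbz, hz⟩ := Set.Finite.exists_maximalFor id {x | b ≤ x} (Set.toFinite _)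
      ⟨b, le_refl b⟩
    have hzmax : ∀ w, z ≤ w → w = z := fun w hw => le_antisymm (hz (le_trans hbz hw) hw) hw
    have hlt := aux_deg_step hch hyM hzmax hya hyb hab hnab hbz
    have hzM : z ∈ M := hzmax
    have : ((ciGraph P).neighborSet y).ncard ≤ ((ciGraph P).neighborSet z).ncard :=
      hymin hzM (le_of_lt hlt)
    omega
  have hcmp := aux_ciGraph_not_adj hnadj hst
  rcases hcmp.1 with hlt | hlt
  · exact key s t hs ht hlt hnadj
  · exact key t s ht hs hlt (fun h => hnadj ((ciGraph P).adj_symm h))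

end CIAux
section Deletion

open SimpleGraph

universe v

variable {P : Type v} [PartialOrder P]

lemma aux_covBy_subtype {p : P} (hp : IsSimplicialVertex (ciGraph P) p)
    (a b : ↥({p}ᶜ : Set P)) : (a : P) ⋖ (b : P) ↔ a ⋖ b := by
  constructor
  · intro h
    exact ⟨Subtype.coe_lt_coe.mp h.lt,
      fun c hc1 hc2 => h.2 (Subtype.coe_lt_coe.mpr hc1) (Subtype.coe_lt_coe.mpr hc2)⟩
  · intro h
    have hab : (a : P) < b := Subtype.coe_lt_coe.mpr h.lt
    by_contra hncov
    have hcp : ∀ c : P, (a : P) < c → c < (b : P) → c = p := by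
      intro c h1 h2
      by_contra hcne
      exact h.2 (Subtype.coe_lt_coe.mp (show (a:P) < ((⟨c, hcne⟩ : ↥({p}ᶜ : Set P)):P) from h1))
        (Subtype.coe_lt_coe.mp (show ((⟨c, hcne⟩ : ↥({p}ᶜ : Set P)):P) < b from h2))
    obtain ⟨c, hc1, hc2⟩ := (not_covBy_iff hab).mp hncov
    obtain rfl : c = p := hcp c hc1 hc2
    have hap : (a : P) ⋖ c :=
      ⟨hc1, fun d hd1 hd2 => absurd (hcp d hd1 (hd2.trans hc2)) hd2.ne⟩
    have hpb : c ⋖ (b : P) :=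
      ⟨hc2, fun d hd1 hd2 => absurd (hcp d (hc1.trans hd1) hd2) hd1.ne'⟩
    have hadj_a : (ciGraph P).Adj c ↑a := Or.inr (Or.inl hap)
    have hadj_b : (ciGraph P).Adj c ↑b := Or.inl hpb
    have hne : (a : P) ≠ (b : P) := hab.ne
    have := hp hadj_a hadj_b hne
    exact hncov (aux_ciGraph_adj_of_lt hab this)

lemma aux_ciGraph_induce_eq {p : P} (hp : IsSimplicialVertex (ciGraph P) p) :
    (ciGraph P).induce {p}ᶜ = ciGraph ↥({p}ᶜ : Set P) := by
  ext a b
  show (ciGraph P).Adj ↑a ↑b ↔ _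
  rw [aux_ciGraph_adj, aux_ciGraph_adj, aux_covBy_subtype hp a b, aux_covBy_subtype hp b a,
    Subtype.coe_le_coe, Subtype.coe_le_coe]

end Deletion
section PairExists

open SimpleGraph

universe v

lemma aux_pair_exists (n : ℕ) : ∀ (Q : Type v) (_ : PartialOrder Q) (_ : Finite Q),
    Nat.card Q ≤ n → IsChordal (ciGraph Q) → ¬ IsCompleteGraph (ciGraph Q) →
    ∃ a b : Q, a ≠ b ∧ ¬ (ciGraph Q).Adj a b ∧
      IsSimplicialVertex (ciGraph Q) a ∧ IsSimplicialVertex (ciGraph Q) b := by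
  induction n with
  | zero =>
    intro Q _ _ hcard hch hnc
    rw [IsCompleteGraph] at hnc
    push_neg at hnc
    obtain ⟨u, w, hne, -⟩ := hnc
    have : Nonempty Q := ⟨u⟩
    have := Nat.card_pos (α := Q)
    omega
  | succ n ih =>
    intro Q instP instF hcard hch hnc
    rw [IsCompleteGraph] at hnc
    push_neg at hnc
    obtain ⟨u, w, huw, hnuw⟩ := hnc
    have hne : Nonempty Q := ⟨u⟩
    obtain ⟨y, hy⟩ := aux_exists_simplicial hch
    have heq := aux_ciGraph_induce_eq hy
    have hch' : IsChordal (ciGraph ↥({y}ᶜ : Set Q)) := heq ▸ aux_chordal_induce hch {y}ᶜ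
    by_cases hcomp : IsCompleteGraph (ciGraph ↥({y}ᶜ : Set Q))
    · -- the deleted graph is complete; y must be one of u, w
      have hxy : u = y ∨ w = y := by
        by_contra hboth
        push_neg at hboth
        have h1 : (ciGraph ↥({y}ᶜ : Set Q)).Adj ⟨u, hboth.1⟩ ⟨w, hboth.2⟩ :=
          hcomp _ _ (fun h => huw (congrArg Subtype.val h))
        rw [← heq] at h1
        exact hnuw h1
      have main : ∀ x : Q, x ≠ y → ¬ (ciGraph Q).Adj y x →
          ∃ a b : Q, a ≠ b ∧ ¬ (ciGraph Q).Adj a b ∧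
            IsSimplicialVertex (ciGraph Q) a ∧ IsSimplicialVertex (ciGraph Q) b := by
        intro x hxney hnadj
        have hxs : IsSimplicialVertex (ciGraph Q) x := by
          intro s hs t ht hst
          have hsy : s ≠ y := by
            rintro rfl
            exact hnadj ((ciGraph Q).adj_symm hs)
          have hty : t ≠ y := by
            rintro rfl
            exact hnadj ((ciGraph Q).adj_symm ht)
          have h1 : (ciGraph ↥({y}ᶜ : Set Q)).Adj ⟨s, hsy⟩ ⟨t, hty⟩ :=
            hcomp _ _ (fun h => hst (congrArg Subtype.val h))
          rw [← heq] at h1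
          exact h1
        exact ⟨x, y, hxney, fun h => hnadj ((ciGraph Q).adj_symm h), hxs, hy⟩
      rcases hxy with rfl | rfl
      · exact main w (fun h => huw h.symm) hnuw
      · exact main u huw (fun h => hnuw ((ciGraph Q).adj_symm h))
    · -- recurse
      have hcard' : Nat.card ↥({y}ᶜ : Set Q) ≤ n := by
        have h1 : Nat.card ↥({y}ᶜ : Set Q) = ({y}ᶜ : Set Q).ncard :=
          (Nat.card_coe_set_eq _)
        have h2 : ({y}ᶜ : Set Q).ncard < (Set.univ : Set Q).ncard := by
          refine Set.ncard_lt_ncard ⟨Set.subset_univ _, fun hsub => ?_⟩ (Set.toFinite _)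
          exact (hsub (Set.mem_univ y)) rfl
        rw [Set.ncard_univ] at h2
        omega
      obtain ⟨a', b', hne', hnab', hsa', hsb'⟩ := ih ↥({y}ᶜ : Set Q) inferInstance inferInstance hcard' hch' hcomp
      rw [← heq] at hnab' hsa' hsb'
      have hcab : ¬ (ciGraph Q).Adj ↑a' ↑b' := fun h => hnab' h
      have hcoene : (a' : Q) ≠ (b' : Q) := fun h => hne' (Subtype.val_injective h)
      by_cases hya : (ciGraph Q).Adj y ↑a'
      · by_cases hyb : (ciGraph Q).Adj y ↑b'
        · exact absurd (hy hya hyb hcoene) hcab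
        · exact ⟨y, ↑b', fun h => b'.2 h.symm, hyb, hy, aux_simplicial_of_induce b' hyb hsb'⟩
      · by_cases hyb : (ciGraph Q).Adj y ↑b'
        · exact ⟨y, ↑a', fun h => a'.2 h.symm, hya, hy, aux_simplicial_of_induce a' hya hsa'⟩
        · exact ⟨↑a', ↑b', hcoene, hcab,
            aux_simplicial_of_induce a' hya hsa', aux_simplicial_of_induce b' hyb hsb'⟩

end PairExists

/-- If a chordal C-I graph `G` has exactly two independent simplicial
vertices and `v` is a simplicial vertex, then `G \ v` is a chordal C-I graph with
exactly two independent simplicial vertices, or `G \ v` is complete. -/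
theorem chordal_CI_two_simplicial_delete {V : Type u} (G : SimpleGraph V)
    (hG : IsChordal G) (hCI : IsCIGraph G) (v : V) (hv : IsSimplicialVertex G v)
    (h2 : HasExactlyTwoIndepSimplicial G) :
    (IsChordal (G.induce {v}ᶜ) ∧ IsCIGraph (G.induce {v}ᶜ) ∧
      HasExactlyTwoIndepSimplicial (G.induce {v}ᶜ)) ∨
      IsCompleteGraph (G.induce {v}ᶜ) := by
  classical
  by_cases hcomp : IsCompleteGraph (G.induce {v}ᶜ)
  · exact Or.inr hcomp
  left
  obtain ⟨W, instW, instF, ⟨e⟩⟩ := hCI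
  set p := e v with hp
  have hpsimp : IsSimplicialVertex (ciGraph W) p := aux_simplicial_map e hv
  have heq := aux_ciGraph_induce_eq hpsimp
  have hchW : IsChordal (ciGraph W) := by
    intro n hn
    constructor
    intro f
    exact (hG n hn).false (e.symm.toEmbedding.comp f)
  have eInd : G.induce {v}ᶜ ≃g (ciGraph W).induce {p}ᶜ := aux_isoInduceCompl e v
  have f : G.induce {v}ᶜ ≃g ciGraph ↥({p}ᶜ : Set W) := heq ▸ eInd
  refine ⟨aux_chordal_induce hG _,
    ⟨↥({p}ᶜ : Set W), inferInstance, inferInstance, ⟨f⟩⟩, ?_, ?_⟩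
  · -- existence of two independent simplicial vertices
    have hchQ : IsChordal (ciGraph ↥({p}ᶜ : Set W)) := heq ▸ aux_chordal_induce hchW {p}ᶜ
    have hncQ : ¬ IsCompleteGraph (ciGraph ↥({p}ᶜ : Set W)) := by
      intro hc
      apply hcomp
      intro x y hxy
      have h1 := hc (f x) (f y) (fun h => hxy (f.toEquiv.injective h))
      exact f.map_rel_iff.mp h1
    obtain ⟨a', b', hne', hnab', hsa', hsb'⟩ :=
      aux_pair_exists (Nat.card ↥({p}ᶜ : Set W)) _ inferInstance inferInstance
        le_rfl hchQ hncQ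
    refine ⟨f.symm a', f.symm b', fun h => hne' (f.symm.toEquiv.injective h), ?_,
      aux_simplicial_map f.symm hsa', aux_simplicial_map f.symm hsb'⟩
    intro h
    exact hnab' (f.symm.map_rel_iff.mp h)
  · -- no three independent simplicial vertices
    rintro ⟨x, y, z, hxy, hxz, hyz, hnxy, hnxz, hnyz, hsx, hsy, hsz⟩
    have hAdj : ∀ (s t : ↥({v}ᶜ : Set V)), s ≠ t → G.Adj v ↑s → G.Adj v ↑t →
        (G.induce {v}ᶜ).Adj s t := by
      intro s t hst h1 h2
      exact hv h1 h2 (fun h => hst (Subtype.val_injective h))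
    have hcne : ∀ (s t : ↥({v}ᶜ : Set V)), s ≠ t → (s : V) ≠ (t : V) :=
      fun s t hst h => hst (Subtype.val_injective h)
    by_cases hax : G.Adj v ↑x
    · by_cases hay : G.Adj v ↑y
      · exact hnxy (hAdj x y hxy hax hay)
      · by_cases haz : G.Adj v ↑z
        · exact hnxz (hAdj x z hxz hax haz)
        · exact h2.2 ⟨v, ↑y, ↑z, fun h => y.2 h.symm, fun h => z.2 h.symm,
            hcne y z hyz, hay, haz, hnyz, hv,
            aux_simplicial_of_induce y hay hsy, aux_simplicial_of_induce z haz hsz⟩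
    · by_cases hay : G.Adj v ↑y
      · by_cases haz : G.Adj v ↑z
        · exact hnyz (hAdj y z hyz hay haz)
        · exact h2.2 ⟨v, ↑x, ↑z, fun h => x.2 h.symm, fun h => z.2 h.symm,
            hcne x z hxz, hax, haz, hnxz, hv,
            aux_simplicial_of_induce x hax hsx, aux_simplicial_of_induce z haz hsz⟩
      · by_cases haz : G.Adj v ↑z
        · exact h2.2 ⟨v, ↑x, ↑y, fun h => x.2 h.symm, fun h => y.2 h.symm,
            hcne x y hxy, hax, hay, hnxy, hv,
            aux_simplicial_of_induce x hax hsx, aux_simplicial_of_induce y hay hsy⟩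
        · exact h2.2 ⟨↑x, ↑y, ↑z, hcne x y hxy, hcne x z hxz, hcne y z hyz,
            hnxy, hnxz, hnyz, aux_simplicial_of_induce x hax hsx,
            aux_simplicial_of_induce y hay hsy, aux_simplicial_of_induce z haz hsz⟩
end

section
/- Let G be a finite chordal graph and (T, structure) a clique tree of G, i.e., T is a tree whose nodes are the maximal cliques of G and, for every vertex v of G, the set of maximal cliques containing v induces a connected subgraph (subtree) of T. Then every leaf node of T, viewed as a maximal clique of G, contains a simplicial vertex of G. -/
open SimpleGraph

lemma reach_aux {U : Type*} (H : SimpleGraph U) {c : U} :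
    ∀ {x : U}, H.Walk x c → x = c ∨ ∃ y, H.Adj y c := by
  intro x w
  induction w with
  | nil => exact Or.inl rfl
  | cons h p ih =>
    right
    rcases ih with rfl | ⟨y, hy⟩
    · exact ⟨_, h⟩
    · exact ⟨y, hy⟩

/-- Every leaf node of a clique tree of a finite chordal graph contains a
simplicial vertex. -/
theorem cliqueTree_leaf_has_simplicial {V : Type*} [Finite V] (G : SimpleGraph V)
    (hG : IsChordal G)
    (T : SimpleGraph {s : Set V // IsMaxClique G s}) (hT : T.IsTree)
    (hsub : ∀ v : V, (T.induce {C : {s : Set V // IsMaxClique G s} | v ∈ (C : Set V)}).Connected)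
    (C : {s : Set V // IsMaxClique G s}) (hleaf : ∃! D, T.Adj C D) :
    ∃ v ∈ (C : Set V), IsSimplicialVertex G v := by
  obtain ⟨D, hCD, huniq⟩ := hleaf
  have hne : (C : Set V) ≠ (D : Set V) := fun h => (T.ne_of_adj hCD) (Subtype.ext h)
  have hnotsub : ¬ (C : Set V) ⊆ (D : Set V) := fun h => hne ((C.2.2 D.1 D.2.1 h).symm)
  obtain ⟨v, hvC, hvD⟩ := Set.not_subset.mp hnotsub
  refine ⟨v, hvC, ?_⟩
  -- every neighbor of v is in C
  have key : ∀ u : V, G.Adj v u → u ∈ (C : Set V) := by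
    intro u hvu
    have hpair : G.IsClique ({v, u} : Set V) := by
      exact SimpleGraph.isClique_pair.mpr fun _ => hvu
    obtain ⟨E, hEsub, hEmax⟩ := Finite.exists_le_maximal hpair
    have hEmc : IsMaxClique G E :=
      ⟨hEmax.1, fun t ht hst => Set.Subset.antisymm (hEmax.2 ht hst) hst⟩
    have hvE : v ∈ E := hEsub (Set.mem_insert _ _)
    have huE : u ∈ E := hEsub (Set.mem_insert_of_mem _ rfl)
    set S : Set {s : Set V // IsMaxClique G s} := {C | v ∈ (C : Set V)}
    have hES : (⟨E, hEmc⟩ : {s : Set V // IsMaxClique G s}) ∈ S := hvE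
    have hCS : C ∈ S := hvC
    have hreach := ((hsub v).preconnected ⟨⟨E, hEmc⟩, hES⟩ ⟨C, hCS⟩)
    obtain ⟨w⟩ := hreach
    rcases reach_aux _ w with heq | ⟨y, hy⟩
    · have : (⟨E, hEmc⟩ : {s : Set V // IsMaxClique G s}) = C := congrArg Subtype.val heq
      rw [← show E = (C : Set V) from congrArg Subtype.val this]
      exact huE
    · exfalso
      have hadj : T.Adj (y.1) C := hy
      have : y.1 = D := huniq y.1 hadj.symm
      exact hvD (this ▸ y.2)
  intro a ha b hb hab
  exact C.2.1 (key a ha) (key b hb) hab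
end

section
/- A finite graph G is a C-I cograph (i.e., both a cograph and a C-I graph) if and only if G is the join of finitely many chordal C-I cographs, i.e., there exist graphs G_1, …, G_k, each of which is chordal, a cograph, and a C-I graph, such that G is isomorphic to G_1 ∨ G_2 ∨ ⋯ ∨ G_k (the graph on the disjoint union of the vertex sets containing all edges of each G_i together with all edges between distinct G_i and G_j). -/
open SimpleGraph

/-- The join of a family of graphs: vertices from different summands are always adjacent,
vertices in the same summand are adjacent iff they are adjacent in that summand. -/
def familyJoin {ι : Type*} {W : ι → Type*} (H : ∀ i, SimpleGraph (W i)) :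
    SimpleGraph (Σ i, W i) where
  Adj x y := x.1 ≠ y.1 ∨
    ∃ (i : ι) (a b : W i), (H i).Adj a b ∧ x = ⟨i, a⟩ ∧ y = ⟨i, b⟩
  symm := by
    constructor
    rintro x y (h | ⟨i, a, b, hab, rfl, rfl⟩)
    · exact Or.inl (Ne.symm h)
    · exact Or.inr ⟨i, b, a, hab.symm, rfl, rfl⟩
  loopless := by
    constructor
    rintro x (h | ⟨i, a, b, hab, rfl, h2⟩)
    · exact h rfl
    · have hab' : a = b := by
        have := (Sigma.mk.inj_iff.mp h2).2
        exact eq_of_heq this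
      exact hab.ne hab'

/-! ### Auxiliary development -/

universe u v w

section BasicCI

variable {V : Type*} [PartialOrder V]

theorem ciGraph_adj {u v : V} :
    (ciGraph V).Adj u v ↔ (u ⋖ v ∨ v ⋖ u ∨ (¬ u ≤ v ∧ ¬ v ≤ u)) := Iff.rfl

/-- `u < v` but not a cover: the "non-edges" of a C-I graph. -/
def IsBT (a c : V) : Prop := a < c ∧ ¬ a ⋖ c

def Bset (v : V) : Prop := ∃ t, IsBT v t

def Tset (v : V) : Prop := ∃ b, IsBT b v

open Classical in
noncomputable def rk (v : V) : ℕ := if Bset v then 0 else if Tset v then 2 else 1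

def cls (v : V) : Set V :=
  {b | (∃ t, IsBT v t ∧ IsBT b t) ∨ IsBT b v ∨ (∃ b₀ t, b₀ < v ∧ v < t ∧ IsBT b t)}

def sQ (V : Type*) [PartialOrder V] : Setoid V :=
  ⟨fun u v => u = v ∨ (cls u = cls v ∧ (cls u).Nonempty), by
    constructor
    · intro x; exact Or.inl rfl
    · rintro x y (rfl | ⟨h1, h2⟩)
      · exact Or.inl rfl
      · exact Or.inr ⟨h1.symm, h1 ▸ h2⟩
    · rintro x y z (rfl | ⟨h1, h2⟩) h3
      · exact h3
      · rcases h3 with rfl | ⟨h3, h4⟩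
        · exact Or.inr ⟨h1, h2⟩
        · exact Or.inr ⟨h1.trans h3, h2⟩⟩

theorem notAdj_of_isBT {u v : V} (h : IsBT u v) : ¬ (ciGraph V).Adj u v := by
  rintro (h1 | h1 | h1)
  · exact h.2 h1
  · exact h.1.asymm h1.lt
  · exact h1.1 h.1.le

theorem notAdj_iff {u v : V} (hne : u ≠ v) :
    ¬ (ciGraph V).Adj u v ↔ (IsBT u v ∨ IsBT v u) := by
  constructor
  · intro h
    have h1 : ¬ u ⋖ v := fun hh => h (Or.inl hh)
    have h2 : ¬ v ⋖ u := fun hh => h (Or.inr (Or.inl hh))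
    have h3 : u ≤ v ∨ v ≤ u := by
      by_contra hh
      push_neg at hh
      exact h (Or.inr (Or.inr hh))
    rcases h3 with h3 | h3
    · exact Or.inl ⟨lt_of_le_of_ne h3 hne, h1⟩
    · exact Or.inr ⟨lt_of_le_of_ne h3 (Ne.symm hne), h2⟩
  · rintro (h | h)
    · exact notAdj_of_isBT h
    · exact fun hh => notAdj_of_isBT h hh.symm

theorem notadj_of_two_step {x y z : V} (h1 : x < y) (h2 : y < z) :
    ¬ (ciGraph V).Adj x z := by
  rintro (h | h | h)
  · exact not_covBy_of_lt_of_lt h1 h2 h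
  · exact (h1.trans h2).asymm h.lt
  · exact h.1 (h1.trans h2).le

end BasicCI

section FiniteCI

variable {V : Type*} [PartialOrder V] [Finite V]

theorem mid {a c : V} (h : IsBT a c) : ∃ m, a < m ∧ m < c := by
  obtain ⟨m, hcov, hle⟩ := exists_covBy_le_of_lt h.1
  refine ⟨m, hcov.lt, lt_of_le_of_ne hle ?_⟩
  rintro rfl
  exact h.2 hcov

variable (hc : IsCograph (ciGraph V))

include hc

theorem no4 {a b c d : V} (h1 : a < b) (h2 : b < c) (h3 : c < d) : False := by
  obtain ⟨m1, hc1, hle1⟩ := exists_covBy_le_of_lt h1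
  have hm1c : m1 < c := lt_of_le_of_lt hle1 h2
  obtain ⟨m2, hc2, hle2⟩ := exists_covBy_le_of_lt hm1c
  have hm2d : m2 < d := lt_of_le_of_lt hle2 h3
  obtain ⟨m3, hc3, hle3⟩ := exists_covBy_le_of_lt hm2d
  exact hc ⟨a, m1, m2, m3,
    hc1.lt.ne, (hc1.lt.trans hc2.lt).ne, ((hc1.lt.trans hc2.lt).trans hc3.lt).ne,
    hc2.lt.ne, (hc2.lt.trans hc3.lt).ne, hc3.lt.ne,
    Or.inl hc1, Or.inl hc2, Or.inl hc3,
    notadj_of_two_step hc1.lt hc2.lt,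
    notadj_of_two_step (hc1.lt.trans hc2.lt) hc3.lt,
    notadj_of_two_step hc2.lt hc3.lt⟩

theorem bot_min {b t x : V} (h : IsBT b t) (hx : x < b) : False := by
  obtain ⟨m, h1, h2⟩ := mid h
  exact no4 hc hx h1 h2

theorem top_max {b t x : V} (h : IsBT b t) (hx : t < x) : False := by
  obtain ⟨m, h1, h2⟩ := mid h
  exact no4 hc h1 h2 hx

theorem BTd {v : V} (hB : Bset v) (hT : Tset v) : False := by
  obtain ⟨t, h1⟩ := hB
  obtain ⟨b, h2⟩ := hT
  exact bot_min hc h1 h2.1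

theorem rk_T {v : V} (h : Tset v) : rk v = 2 := by
  have hB : ¬ Bset v := fun hB => BTd hc hB h
  simp [rk, hB, h]

theorem L1 {x y t t' : V} (hxt : IsBT x t) (hyt : IsBT y t) (hyt' : IsBT y t') :
    IsBT x t' := by
  by_cases hxy : x = y
  · subst hxy; exact hyt'
  by_cases htt : t = t'
  · subst htt; exact hxt
  by_contra hcon
  have hx_ne_t' : x ≠ t' := fun he => bot_min hc hxt (show y < x by rw [he]; exact hyt'.1)
  have hAxy : (ciGraph V).Adj y x := by
    refine Or.inr (Or.inr ⟨fun h => ?_, fun h => ?_⟩)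
    · exact bot_min hc hxt (lt_of_le_of_ne h (Ne.symm hxy))
    · exact bot_min hc hyt (lt_of_le_of_ne h hxy)
  have hAxt' : (ciGraph V).Adj x t' := by
    by_cases h1 : x ≤ t'
    · have hlt : x < t' := lt_of_le_of_ne h1 hx_ne_t'
      have hcov : x ⋖ t' := by
        by_contra h2
        exact hcon ⟨hlt, h2⟩
      exact Or.inl hcov
    · by_cases h2 : t' ≤ x
      · exact absurd (lt_of_le_of_ne h2 (Ne.symm hx_ne_t')) (fun hlt => top_max hc hyt' hlt)
      · exact Or.inr (Or.inr ⟨h1, h2⟩)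
  have hAt't : (ciGraph V).Adj t' t := by
    refine Or.inr (Or.inr ⟨fun h => ?_, fun h => ?_⟩)
    · exact top_max hc hyt' (lt_of_le_of_ne h (fun he => htt he.symm))
    · exact top_max hc hyt (lt_of_le_of_ne h htt)
  exact hc ⟨y, x, t', t,
    Ne.symm hxy, hyt'.1.ne, hyt.1.ne, hx_ne_t', hxt.1.ne, fun h => htt h.symm,
    hAxy, hAxt', hAt't, notAdj_of_isBT hyt', notAdj_of_isBT hyt, notAdj_of_isBT hxt⟩

theorem L2 {b b' t t' : V} (hbt : IsBT b t) (hbt' : IsBT b t') (hb't' : IsBT b' t') :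
    IsBT b' t := by
  by_cases hbb : b = b'
  · subst hbb; exact hbt
  by_cases htt : t = t'
  · subst htt; exact hb't'
  by_contra hcon
  have hb'_ne_t : b' ≠ t := fun he => bot_min hc hb't' (show b < b' by rw [he]; exact hbt.1)
  have hAbb' : (ciGraph V).Adj b b' := by
    refine Or.inr (Or.inr ⟨fun h => ?_, fun h => ?_⟩)
    · exact bot_min hc hb't' (lt_of_le_of_ne h hbb)
    · exact bot_min hc hbt (lt_of_le_of_ne h (Ne.symm hbb))
  have hAb't : (ciGraph V).Adj b' t := by
    by_cases h1 : b' ≤ t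
    · have hlt : b' < t := lt_of_le_of_ne h1 hb'_ne_t
      have hcov : b' ⋖ t := by
        by_contra h2
        exact hcon ⟨hlt, h2⟩
      exact Or.inl hcov
    · by_cases h2 : t ≤ b'
      · exact absurd (lt_of_le_of_ne h2 (Ne.symm hb'_ne_t)) (fun hlt => top_max hc hbt hlt)
      · exact Or.inr (Or.inr ⟨h1, h2⟩)
  have hAtt' : (ciGraph V).Adj t t' := by
    refine Or.inr (Or.inr ⟨fun h => ?_, fun h => ?_⟩)
    · exact top_max hc hbt (lt_of_le_of_ne h htt)
    · exact top_max hc hbt' (lt_of_le_of_ne h (fun he => htt he.symm))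
  exact hc ⟨b, b', t, t',
    hbb, hbt.1.ne, hbt'.1.ne, hb'_ne_t, hb't'.1.ne, htt,
    hAbb', hAb't, hAtt', notAdj_of_isBT hbt, notAdj_of_isBT hbt', notAdj_of_isBT hb't'⟩

theorem clsB {v t₀ : V} (h : IsBT v t₀) :
    cls v = {b | ∃ t, IsBT v t ∧ IsBT b t} := by
  ext b
  constructor
  · rintro (h1 | h1 | ⟨b₀, t, hb₀, ht, hbt⟩)
    · exact h1
    · exact absurd h1.1 (fun hh => bot_min hc h hh)
    · obtain ⟨m, hm1, hm2⟩ := mid h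
      exact absurd hb₀ (fun hh => no4 hc hh hm1 hm2)
  · exact fun h1 => Or.inl h1

theorem clsT {v b₀ : V} (h : IsBT b₀ v) : cls v = {b | IsBT b v} := by
  ext b
  constructor
  · rintro (⟨t, h1, h2⟩ | h1 | ⟨b₁, t, hb₁, ht, hbt⟩)
    · exact absurd h.1 (fun hh => bot_min hc h1 hh)
    · exact h1
    · obtain ⟨m, hm1, hm2⟩ := mid h
      exact absurd ht (fun hh => no4 hc hm1 hm2 hh)
  · exact fun h1 => Or.inr (Or.inl h1)

theorem E1 {u v : V} (h : IsBT u v) : cls u = cls v := by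
  rw [clsB hc h, clsT hc h]
  ext b
  constructor
  · rintro ⟨t, h1, h2⟩
    exact L1 hc h2 h1 h
  · intro h1
    exact ⟨v, h, h1⟩

omit [Finite V] hc in
theorem clsM {v : V} (hB : ¬ Bset v) (hT : ¬ Tset v) :
    cls v = {b | ∃ b₀ t, b₀ < v ∧ v < t ∧ IsBT b t} := by
  ext b
  constructor
  · rintro (⟨t, h1, h2⟩ | h1 | h1)
    · exact absurd ⟨t, h1⟩ hB
    · exact absurd ⟨b, h1⟩ hT
    · exact h1
  · exact fun h1 => Or.inr (Or.inr h1)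

theorem Em {b₀ m t : V} (h1 : b₀ < m) (h2 : m < t) : cls m = cls b₀ := by
  have hBm : ¬ Bset m := by
    rintro ⟨s, hs⟩
    obtain ⟨x, hx1, hx2⟩ := mid hs
    exact no4 hc h1 hx1 hx2
  have hTm : ¬ Tset m := by
    rintro ⟨x, hx⟩
    obtain ⟨y, hy1, hy2⟩ := mid hx
    exact no4 hc hy1 hy2 h2
  have hb₀t : IsBT b₀ t := ⟨h1.trans h2, not_covBy_of_lt_of_lt h1 h2⟩
  rw [clsM hBm hTm, clsB hc hb₀t]
  ext b
  constructor
  · rintro ⟨b₁, s, hb₁, hs, hbs⟩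
    exact ⟨s, ⟨h1.trans hs, not_covBy_of_lt_of_lt h1 hs⟩, hbs⟩
  · rintro ⟨s, h3, h4⟩
    exact ⟨b₀, t, h1, h2, L1 hc h4 h3 hb₀t⟩

end FiniteCI

section RankLemmas

variable {V : Type*} [PartialOrder V]

theorem rk_B {v : V} (h : Bset v) : rk v = 0 := by simp [rk, h]

theorem rk_M {v : V} (h1 : ¬ Bset v) (h2 : ¬ Tset v) : rk v = 1 := by
  simp [rk, h1, h2]

theorem rk0 {v : V} (h : rk v = 0) : Bset v := by
  by_contra hB
  by_cases hT : Tset v <;> simp [rk, hB, hT] at h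

theorem rk2 {v : V} (h : rk v = 2) : Tset v := by
  by_contra hT
  by_cases hB : Bset v <;> simp [rk, hB, hT] at h

theorem rk_cases (v : V) : rk v = 0 ∨ rk v = 1 ∨ rk v = 2 := by
  by_cases hB : Bset v <;> by_cases hT : Tset v <;> simp [rk, hB, hT]

theorem self_mem_cls {v t : V} (h : IsBT v t) : v ∈ cls v := Or.inl ⟨t, h, h⟩

end RankLemmas

section CycleHelpers

open SimpleGraph

theorem fin_sub_val {n : ℕ} (a b : Fin n) : (a - b).val = (n - b.val + a.val) % n := by
  simp [Fin.sub_def]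

theorem cyc_adj {n : ℕ} (hn : 3 < n) {i j : Fin n} (h : j.val = i.val + 1) :
    (cycleGraph n).Adj i j := by
  rw [cycleGraph_adj']
  right
  rw [fin_sub_val]
  have hi := i.isLt
  have e1 : n - i.val + j.val = n + 1 := by omega
  rw [e1, Nat.add_mod_left, Nat.mod_eq_of_lt (by omega)]

theorem cyc_nonadj {n : ℕ} (hn : 3 < n) {i j : Fin n} (h2 : i.val + 2 ≤ j.val)
    (h3 : j.val + 1 < i.val + n) : ¬ (cycleGraph n).Adj i j := by
  rw [cycleGraph_adj', fin_sub_val, fin_sub_val]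
  have hi := i.isLt
  have hj := j.isLt
  have e1 : n - j.val + i.val = n - (j.val - i.val) := by omega
  have e2 : n - i.val + j.val = n + (j.val - i.val) := by omega
  rw [e1, e2, Nat.add_mod_left, Nat.mod_eq_of_lt (by omega), Nat.mod_eq_of_lt (by omega)]
  omega

end CycleHelpers

section FamilyJoinLemmas

theorem familyJoin_adj {ι : Type*} {W : ι → Type*} (H : ∀ i, SimpleGraph (W i))
    {x y : Σ i, W i} :
    (familyJoin H).Adj x y ↔ (x.1 ≠ y.1 ∨
      ∃ (i : ι) (a b : W i), (H i).Adj a b ∧ x = ⟨i, a⟩ ∧ y = ⟨i, b⟩) := Iff.rfl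

theorem familyJoin_adj_mk {ι : Type*} {W : ι → Type*} {H : ∀ i, SimpleGraph (W i)}
    {i : ι} {a b : W i} :
    (familyJoin H).Adj ⟨i, a⟩ ⟨i, b⟩ ↔ (H i).Adj a b := by
  rw [familyJoin_adj]
  constructor
  · rintro (h | ⟨j, x, y, hxy, h1, h2⟩)
    · exact absurd rfl h
    · obtain ⟨rfl, h1'⟩ := Sigma.mk.inj_iff.mp h1
      obtain ⟨-, h2'⟩ := Sigma.mk.inj_iff.mp h2
      obtain rfl := eq_of_heq h1'
      obtain rfl := eq_of_heq h2'
      exact hxy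
  · intro h
    exact Or.inr ⟨i, a, b, h, rfl, rfl⟩

theorem cograph_of_iso {α β : Type*} {G : SimpleGraph α} {G' : SimpleGraph β}
    (e : G ≃g G') (h : IsCograph G') : IsCograph G := by
  rintro ⟨a, b, c, d, h1, h2, h3, h4, h5, h6, e1, e2, e3, n1, n2, n3⟩
  refine h ⟨e a, e b, e c, e d, ?_, ?_, ?_, ?_, ?_, ?_, ?_, ?_, ?_, ?_, ?_, ?_⟩
  · exact fun hh => h1 (e.injective hh)
  · exact fun hh => h2 (e.injective hh)
  · exact fun hh => h3 (e.injective hh)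
  · exact fun hh => h4 (e.injective hh)
  · exact fun hh => h5 (e.injective hh)
  · exact fun hh => h6 (e.injective hh)
  · exact e.map_adj_iff.mpr e1
  · exact e.map_adj_iff.mpr e2
  · exact e.map_adj_iff.mpr e3
  · exact fun hh => n1 (e.map_adj_iff.mp hh)
  · exact fun hh => n2 (e.map_adj_iff.mp hh)
  · exact fun hh => n3 (e.map_adj_iff.mp hh)

theorem cograph_familyJoin {ι : Type*} {W : ι → Type*} (H : ∀ i, SimpleGraph (W i))
    (h : ∀ i, IsCograph (H i)) : IsCograph (familyJoin H) := by
  rintro ⟨⟨i1, a⟩, ⟨i2, b⟩, ⟨i3, c⟩, ⟨i4, d⟩, h1, h2, h3, h4, h5, h6,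
    e1, e2, e3, n1, n2, n3⟩
  have g13 : i1 = i3 := by by_contra hh; exact n1 (Or.inl hh)
  have g14 : i1 = i4 := by by_contra hh; exact n2 (Or.inl hh)
  have g24 : i2 = i4 := by by_contra hh; exact n3 (Or.inl hh)
  have g12 : i1 = i2 := g14.trans g24.symm
  subst g13; subst g14; subst g12
  refine h i1 ⟨a, b, c, d, ?_, ?_, ?_, ?_, ?_, ?_,
    familyJoin_adj_mk.mp e1, familyJoin_adj_mk.mp e2, familyJoin_adj_mk.mp e3,
    fun hh => n1 (familyJoin_adj_mk.mpr hh),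
    fun hh => n2 (familyJoin_adj_mk.mpr hh),
    fun hh => n3 (familyJoin_adj_mk.mpr hh)⟩
  · exact fun hh => h1 (by rw [hh])
  · exact fun hh => h2 (by rw [hh])
  · exact fun hh => h3 (by rw [hh])
  · exact fun hh => h4 (by rw [hh])
  · exact fun hh => h5 (by rw [hh])
  · exact fun hh => h6 (by rw [hh])

end FamilyJoinLemmas

section SigmaPoset

variable {ι : Type*} {α : ι → Type*} [∀ i, PartialOrder (α i)]

theorem sigma_covBy_iff {i : ι} {a b : α i} :
    (⟨i, a⟩ : Σ i, α i) ⋖ ⟨i, b⟩ ↔ a ⋖ b := by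
  constructor
  · intro h
    refine ⟨Sigma.mk_lt_mk_iff.mp h.1, fun z hz1 hz2 => ?_⟩
    exact h.2 (Sigma.mk_lt_mk_iff.mpr hz1) (Sigma.mk_lt_mk_iff.mpr hz2)
  · intro h
    refine ⟨Sigma.mk_lt_mk_iff.mpr h.1, ?_⟩
    rintro ⟨j, z⟩ hz1 hz2
    obtain ⟨(rfl : i = j), -⟩ := Sigma.lt_def.mp hz1
    exact h.2 (Sigma.mk_lt_mk_iff.mp hz1) (Sigma.mk_lt_mk_iff.mp hz2)

theorem sigma_ci_adj {i : ι} {a b : α i} :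
    (ciGraph (Σ i, α i)).Adj ⟨i, a⟩ ⟨i, b⟩ ↔ (ciGraph (α i)).Adj a b := by
  rw [ciGraph_adj, ciGraph_adj]
  exact or_congr sigma_covBy_iff (or_congr sigma_covBy_iff
    (and_congr (not_congr Sigma.mk_le_mk_iff) (not_congr Sigma.mk_le_mk_iff)))

theorem sigma_ci_adj_ne {x y : Σ i, α i} (h : x.1 ≠ y.1) :
    (ciGraph (Σ i, α i)).Adj x y := by
  refine Or.inr (Or.inr ⟨fun hh => ?_, fun hh => ?_⟩)
  · exact h (Sigma.le_def.mp hh).1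
  · exact h ((Sigma.le_def.mp hh).1).symm

end SigmaPoset

section CIJoin

theorem ci_familyJoin {k : ℕ} {W : Fin k → Type u} (H : ∀ i, SimpleGraph (W i))
    (hfin : ∀ i, Finite (W i)) (h : ∀ i, IsCIGraph (H i)) :
    IsCIGraph (familyJoin H) := by
  choose Vi PO Fi g using h
  letI : ∀ i, PartialOrder (Vi i) := PO
  haveI : ∀ i, Finite (Vi i) := Fi
  have gi : ∀ i, H i ≃g ciGraph (Vi i) := fun i => (g i).some
  have isoA : familyJoin H ≃g familyJoin (fun i => ciGraph (Vi i)) := by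
    refine ⟨Equiv.sigmaCongrRight (fun i => (gi i).toEquiv), ?_⟩
    rintro ⟨i, a⟩ ⟨j, b⟩
    show (familyJoin _).Adj ⟨i, gi i a⟩ ⟨j, gi j b⟩ ↔ (familyJoin H).Adj ⟨i, a⟩ ⟨j, b⟩
    by_cases hij : i = j
    · subst hij
      rw [familyJoin_adj_mk, familyJoin_adj_mk]
      exact (gi i).map_adj_iff
    · exact iff_of_true (Or.inl hij) (Or.inl hij)
  have isoB : familyJoin (fun i => ciGraph (Vi i)) ≃g ciGraph (Σ i, Vi i) := by
    refine ⟨Equiv.refl _, ?_⟩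
    rintro ⟨i, a⟩ ⟨j, b⟩
    show (ciGraph (Σ i, Vi i)).Adj ⟨i, a⟩ ⟨j, b⟩ ↔ _
    by_cases hij : i = j
    · subst hij
      rw [sigma_ci_adj, familyJoin_adj_mk]
    · exact iff_of_true (sigma_ci_adj_ne hij) (Or.inl hij)
  exact ⟨Σ i, Vi i, inferInstance, inferInstance, ⟨isoA.trans isoB⟩⟩

end CIJoin

section Forward

theorem main_forward {V : Type u} [PartialOrder V] [Finite V]
    (hc : IsCograph (ciGraph V)) :
    ∃ (k : ℕ) (W : Fin k → Type u) (H : ∀ i, SimpleGraph (W i)),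
      (∀ i, Finite (W i)) ∧
      (∀ i, IsChordal (H i) ∧ IsCograph (H i) ∧ IsCIGraph (H i)) ∧
      Nonempty (ciGraph V ≃g familyJoin H) := by
  classical
  haveI : Finite (Quotient (sQ V)) := Quotient.finite _
  set k := Nat.card (Quotient (sQ V)) with hk
  let e : Quotient (sQ V) ≃ Fin k := Finite.equivFin (Quotient (sQ V))
  let q : V → Fin k := fun v => e (Quotient.mk (sQ V) v)
  let W : Fin k → Type u := fun i => {v : V // q v = i}
  let H : ∀ i, SimpleGraph (W i) :=
    fun i => SimpleGraph.comap (fun x : W i => (x : V)) (ciGraph V)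
  have hHadj : ∀ (i : Fin k) (x y : W i),
      (H i).Adj x y ↔ (ciGraph V).Adj x.1 y.1 := fun _ _ _ => Iff.rfl
  have hq_eq : ∀ {u v : V}, (u = v ∨ (cls u = cls v ∧ (cls u).Nonempty)) → q u = q v :=
    fun h => congrArg e (Quotient.sound h)
  have hq_rel : ∀ {u v : V}, q u = q v → (u = v ∨ (cls u = cls v ∧ (cls u).Nonempty)) :=
    fun h => Quotient.exact (e.injective h)
  -- non-adjacent distinct vertices lie in the same part
  have hcross : ∀ {u v : V}, ¬ (ciGraph V).Adj u v → u ≠ v → q u = q v := by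
    intro u v hna hne
    rcases (notAdj_iff hne).mp hna with h | h
    · exact hq_eq (Or.inr ⟨E1 hc h, ⟨u, self_mem_cls h⟩⟩)
    · exact (hq_eq (Or.inr ⟨E1 hc h, ⟨v, self_mem_cls h⟩⟩)).symm
  -- a bottom and a top in the same part form a non-edge
  have hBT : ∀ {u v : V}, q u = q v → Bset u → Tset v → IsBT u v := by
    rintro u v hq ⟨c, hu⟩ ⟨b, hv⟩
    rcases hq_rel hq with rfl | ⟨hcl, -⟩
    · exact absurd hv.1 (fun hh => bot_min hc hu hh)
    · have huv : u ∈ cls v := hcl ▸ self_mem_cls hu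
      rwa [clsT hc hv] at huv
  -- within a part, the non-edges form a complete bipartite pattern
  have hbip : ∀ {a b c d : V}, q a = q b → IsBT a c → IsBT b d → IsBT a d := by
    intro a b c d hq hac hbd
    rcases hq_rel hq with rfl | ⟨hcl, -⟩
    · exact hbd
    · have hb : b ∈ cls a := hcl ▸ self_mem_cls hbd
      rw [clsB hc hac] at hb
      obtain ⟨t, h1, h2⟩ := hb
      exact L1 hc h1 h2 hbd
  -- every non-edge has a middle element in the same part
  have hmid : ∀ {u v : V}, IsBT u v → ∃ m, q m = q u ∧ u < m ∧ m < v := by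
    intro u v h
    obtain ⟨m, h1, h2⟩ := mid h
    refine ⟨m, hq_eq (Or.inr ⟨Em hc h1 h2, ?_⟩), h1, h2⟩
    rw [Em hc h1 h2]
    exact ⟨u, self_mem_cls h⟩
  -- no induced 4-cycle within a part
  have hC4 : ∀ a b c d : V, q a = q b → q b = q c → q c = q d →
      (ciGraph V).Adj a b → (ciGraph V).Adj b c → (ciGraph V).Adj c d →
      (ciGraph V).Adj d a → ¬ (ciGraph V).Adj a c → ¬ (ciGraph V).Adj b d →
      a ≠ c → b ≠ d → False := by
    intro a b c d hqab hqbc hqcd hab hbc hcd hda hnac hnbd hac hbd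
    rcases (notAdj_iff hac).mp hnac with h1 | h1 <;>
      rcases (notAdj_iff hbd).mp hnbd with h2 | h2
    · exact notAdj_of_isBT (hbip hqab h1 h2) hda.symm
    · exact notAdj_of_isBT (hBT hqab ⟨c, h1⟩ ⟨d, h2⟩) hab
    · exact notAdj_of_isBT (hbip hqbc.symm h1 h2) hcd
    · exact notAdj_of_isBT (hBT hqbc.symm ⟨a, h1⟩ ⟨d, h2⟩) hbc.symm
  have hfinW : ∀ i, Finite (W i) := fun i => Subtype.finite
  have hcogW : ∀ i, IsCograph (H i) := by
    rintro i ⟨a, b, c, d, h1, h2, h3, h4, h5, h6, e1, e2, e3, n1, n2, n3⟩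
    exact hc ⟨a.1, b.1, c.1, d.1,
      fun hh => h1 (Subtype.ext hh), fun hh => h2 (Subtype.ext hh),
      fun hh => h3 (Subtype.ext hh), fun hh => h4 (Subtype.ext hh),
      fun hh => h5 (Subtype.ext hh), fun hh => h6 (Subtype.ext hh),
      (hHadj i a b).mp e1, (hHadj i b c).mp e2, (hHadj i c d).mp e3,
      fun hh => n1 ((hHadj i a c).mpr hh), fun hh => n2 ((hHadj i a d).mpr hh),
      fun hh => n3 ((hHadj i b d).mpr hh)⟩
  have hchW : ∀ i, IsChordal (H i) := by
    intro i n hn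
    refine ⟨fun f => ?_⟩
    have hfne : ∀ {a b : Fin n}, a.val ≠ b.val → f a ≠ f b :=
      fun h hab => h (congrArg Fin.val (f.injective hab))
    by_cases h4 : n = 4
    · subst h4
      have q01 : q (f 0).1 = q (f 1).1 := (f 0).2.trans (f 1).2.symm
      have q12 : q (f 1).1 = q (f 2).1 := (f 1).2.trans (f 2).2.symm
      have q23 : q (f 2).1 = q (f 3).1 := (f 2).2.trans (f 3).2.symm
      refine hC4 (f 0).1 (f 1).1 (f 2).1 (f 3).1 q01 q12 q23 ?_ ?_ ?_ ?_ ?_ ?_ ?_ ?_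
      · exact (hHadj i _ _).mp (f.map_adj_iff.mpr
          (show (SimpleGraph.cycleGraph 4).Adj 0 1 by decide))
      · exact (hHadj i _ _).mp (f.map_adj_iff.mpr
          (show (SimpleGraph.cycleGraph 4).Adj 1 2 by decide))
      · exact (hHadj i _ _).mp (f.map_adj_iff.mpr
          (show (SimpleGraph.cycleGraph 4).Adj 2 3 by decide))
      · exact (hHadj i _ _).mp (f.map_adj_iff.mpr
          (show (SimpleGraph.cycleGraph 4).Adj 3 0 by decide))
      · exact fun hh =>
          (by decide : ¬ (SimpleGraph.cycleGraph 4).Adj 0 2)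
            (f.map_adj_iff.mp ((hHadj i _ _).mpr hh))
      · exact fun hh =>
          (by decide : ¬ (SimpleGraph.cycleGraph 4).Adj 1 3)
            (f.map_adj_iff.mp ((hHadj i _ _).mpr hh))
      · exact fun hh => (by decide : ¬ ((0 : Fin 4) = 2)) (f.injective (Subtype.ext hh))
      · exact fun hh => (by decide : ¬ ((1 : Fin 4) = 3)) (f.injective (Subtype.ext hh))
    · have h5 : 4 < n := by omega
      have hn' : 3 < n := by omega
      let v0 : Fin n := ⟨0, by omega⟩
      let v1 : Fin n := ⟨1, by omega⟩
      let v2 : Fin n := ⟨2, by omega⟩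
      let v3 : Fin n := ⟨3, by omega⟩
      have e0 : v0.val = 0 := rfl
      have e1 : v1.val = 1 := rfl
      have e2 : v2.val = 2 := rfl
      have e3 : v3.val = 3 := rfl
      refine hcogW i ⟨f v0, f v1, f v2, f v3, ?_, ?_, ?_, ?_, ?_, ?_,
        f.map_adj_iff.mpr (cyc_adj hn' (by omega)),
        f.map_adj_iff.mpr (cyc_adj hn' (by omega)),
        f.map_adj_iff.mpr (cyc_adj hn' (by omega)),
        fun hh => cyc_nonadj hn' (by omega) (by omega) (f.map_adj_iff.mp hh),
        fun hh => cyc_nonadj hn' (by omega) (by omega) (f.map_adj_iff.mp hh),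
        fun hh => cyc_nonadj hn' (by omega) (by omega) (f.map_adj_iff.mp hh)⟩
      · exact hfne (by omega)
      · exact hfne (by omega)
      · exact hfne (by omega)
      · exact hfne (by omega)
      · exact hfne (by omega)
      · exact hfne (by omega)
  have hciW : ∀ i, IsCIGraph (H i) := by
    intro i
    haveI := hfinW i
    letI P : PartialOrder (W i) :=
      { le := fun x y => x = y ∨ rk x.1 < rk y.1
        lt := fun x y => rk x.1 < rk y.1
        le_refl := fun x => Or.inl rfl
        le_trans := by
          rintro x y z (rfl | h1) h2
          · exact h2
          · rcases h2 with rfl | h2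
            · exact Or.inr h1
            · exact Or.inr (h1.trans h2)
        lt_iff_le_not_ge := by
          intro x y
          constructor
          · intro h
            refine ⟨Or.inr h, ?_⟩
            rintro (rfl | h2)
            · exact Nat.lt_irrefl _ h
            · exact Nat.lt_asymm h h2
          · rintro ⟨rfl | h1, h2⟩
            · exact absurd (Or.inl rfl) h2
            · exact h1
        le_antisymm := by
          rintro x y (rfl | h1) h2
          · rfl
          · rcases h2 with rfl | h2
            · rfl
            · exact absurd h1 h2.asymm }
    have hrkz : ∀ {p r : W i},
        @LT.lt (W i) (@Preorder.toLT _ (@PartialOrder.toPreorder _ P)) p r →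
        rk p.1 < rk r.1 := fun h => h
    have hltP : ∀ {p r : W i}, rk p.1 < rk r.1 →
        @LT.lt (W i) (@Preorder.toLT _ (@PartialOrder.toPreorder _ P)) p r := fun h => h
    have key : ∀ u v : W i, u ≠ v → rk u.1 ≤ rk v.1 →
        ((ciGraph (W i)).Adj u v ↔ (ciGraph V).Adj u.1 v.1) := by
      intro u v hne hle
      have hq : q u.1 = q v.1 := u.2.trans v.2.symm
      have hne1 : u.1 ≠ v.1 := fun hh => hne (Subtype.ext hh)
      rcases eq_or_lt_of_le hle with heq | hlt
      · refine iff_of_true (Or.inr (Or.inr ⟨?_, ?_⟩)) ?_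
        · rintro (rfl | h)
          · exact hne rfl
          · omega
        · rintro (rfl | h)
          · exact hne rfl
          · omega
        · by_contra hna
          rcases (notAdj_iff hne1).mp hna with h | h
          · have e0 := rk_B (⟨_, h⟩ : Bset u.1)
            have e2 := rk_T hc (⟨_, h⟩ : Tset v.1)
            omega
          · have e0 := rk_B (⟨_, h⟩ : Bset v.1)
            have e2 := rk_T hc (⟨_, h⟩ : Tset u.1)
            omega
      · by_cases hsucc : rk v.1 = rk u.1 + 1
        · refine iff_of_true (Or.inl ⟨hltP hlt, ?_⟩) ?_
          · intro z hz1 hz2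
            have a1 := hrkz hz1
            have a2 := hrkz hz2
            omega
          · by_contra hna
            rcases (notAdj_iff hne1).mp hna with h | h
            · have e0 := rk_B (⟨_, h⟩ : Bset u.1)
              have e2 := rk_T hc (⟨_, h⟩ : Tset v.1)
              omega
            · have e0 := rk_B (⟨_, h⟩ : Bset v.1)
              have e2 := rk_T hc (⟨_, h⟩ : Tset u.1)
              omega
        · have h0 : rk u.1 = 0 := by
            rcases rk_cases u.1 with h | h | h <;> rcases rk_cases v.1 with g | g | g <;> omega
          have g2 : rk v.1 = 2 := by
            rcases rk_cases u.1 with h | h | h <;> rcases rk_cases v.1 with g | g | g <;> omega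
          have hbt : IsBT u.1 v.1 := hBT hq (rk0 h0) (rk2 g2)
          refine iff_of_false ?_ (notAdj_of_isBT hbt)
          rintro (hcov | hcov | hinc)
          · obtain ⟨m, hqm, hm1, hm2⟩ := hmid hbt
            have hqm' : q m = i := hqm.trans u.2
            have hrkm : rk m = 1 := by
              refine rk_M ?_ ?_
              · rintro ⟨s, hs⟩
                exact bot_min hc hs hm1
              · rintro ⟨bb, hb⟩
                exact top_max hc hb hm2
            exact hcov.2 (hltP (p := u) (r := ⟨m, hqm'⟩) (show rk u.1 < rk m by omega))
              (hltP (p := ⟨m, hqm'⟩) (r := v) (show rk m < rk v.1 by omega))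
          · have := hrkz hcov.1
            omega
          · exact hinc.1 (Or.inr hlt)
    refine ⟨W i, P, inferInstance, ⟨⟨Equiv.refl _, ?_⟩⟩⟩
    intro x y
    show (ciGraph (W i)).Adj x y ↔ (H i).Adj x y
    rw [hHadj]
    by_cases hxy : x = y
    · subst hxy
      exact iff_of_false ((ciGraph (W i)).irrefl) ((ciGraph V).irrefl)
    · rcases le_total (rk x.1) (rk y.1) with hle | hle
      · exact key x y hxy hle
      · rw [(ciGraph (W i)).adj_comm, (ciGraph V).adj_comm]
        exact key y x (Ne.symm hxy) hle
  refine ⟨k, W, H, hfinW, fun i => ⟨hchW i, hcogW i, hciW i⟩, ⟨⟨(Equiv.sigmaFiberEquiv q).symm, ?_⟩⟩⟩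
  intro u v
  show (familyJoin H).Adj ⟨q u, ⟨u, rfl⟩⟩ ⟨q v, ⟨v, rfl⟩⟩ ↔ (ciGraph V).Adj u v
  have hmk : ∀ (w : V) (j : Fin k) (hj : q w = j),
      (⟨q w, ⟨w, rfl⟩⟩ : Σ i, W i) = ⟨j, ⟨w, hj⟩⟩ := by
    rintro w j rfl
    rfl
  by_cases hq : q u = q v
  · constructor
    · rintro (h | ⟨j, a, b, hab, h1, h2⟩)
      · exact absurd hq h
      · have ea : u = a.1 := congrArg (fun x : Σ i, W i => x.2.1) h1
        have eb : v = b.1 := congrArg (fun x : Σ i, W i => x.2.1) h2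
        rw [ea, eb]
        exact (hHadj j a b).mp hab
    · intro h
      exact Or.inr ⟨q u, ⟨u, rfl⟩, ⟨v, hq.symm⟩,
        (hHadj (q u) ⟨u, rfl⟩ ⟨v, hq.symm⟩).mpr h, rfl, hmk v (q u) hq.symm⟩
  · refine iff_of_true (Or.inl hq) ?_
    by_contra hna
    exact hq (hcross hna (fun hh => hq (congrArg q hh)))

end Forward

/-- A finite graph is a C-I cograph iff it is (isomorphic to) the join of
finitely many chordal C-I cographs. -/
theorem CI_cograph_iff_join {V : Type u} [Finite V] (G : SimpleGraph V) :
    (IsCograph G ∧ IsCIGraph G) ↔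
      ∃ (k : ℕ) (W : Fin k → Type u) (H : ∀ i, SimpleGraph (W i)),
        (∀ i, Finite (W i)) ∧
        (∀ i, IsChordal (H i) ∧ IsCograph (H i) ∧ IsCIGraph (H i)) ∧
        Nonempty (G ≃g familyJoin H) := by
  constructor
  · rintro ⟨hcog, V', instV, finV, ⟨e⟩⟩
    letI := instV
    haveI := finV
    have hc' : IsCograph (ciGraph V') := cograph_of_iso e.symm hcog
    obtain ⟨k, W, H, h1, h2, ⟨e2⟩⟩ := main_forward hc'
    exact ⟨k, W, H, h1, h2, ⟨e.trans e2⟩⟩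
  · rintro ⟨k, W, H, hfin, hprop, ⟨e⟩⟩
    constructor
    · exact cograph_of_iso e (cograph_familyJoin H (fun i => (hprop i).2.1))
    · obtain ⟨T, PT, FT, ⟨e3⟩⟩ := ci_familyJoin H hfin (fun i => (hprop i).2.2)
      exact ⟨T, PT, FT, ⟨e.trans e3⟩⟩
end

section
/- Let G be a finite graph that is a C-I cograph. Then for any three distinct vertices u, v, w of G, if u is not adjacent to v and u is not adjacent to w, then v is adjacent to w. -/
open SimpleGraph

section AuxCI

variable {P : Type*} [PartialOrder P] [Finite P]

lemma aux_exists_le_covBy {x y : P} (h : x < y) : ∃ a, x ≤ a ∧ a ⋖ y := by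
  obtain ⟨a, ⟨hxa, hay⟩, hmax⟩ := Set.Finite.exists_maximalFor (id : P → P)
    {a | x ≤ a ∧ a < y} (Set.toFinite _) ⟨x, le_rfl, h⟩
  refine ⟨a, hxa, hay, fun c hac hcy => ?_⟩
  exact absurd (hmax ⟨hxa.trans hac.le, hcy⟩ hac.le) hac.not_ge

lemma aux_exists_covBy_le {x y : P} (h : x < y) : ∃ a, x ⋖ a ∧ a ≤ y := by
  obtain ⟨a, hay, hxa⟩ := aux_exists_le_covBy (P := Pᵒᵈ) (x := OrderDual.toDual y)
    (y := OrderDual.toDual x) h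
  exact ⟨a, hxa.ofDual, hay⟩

lemma ciGraph_not_adj_of_lt_not_covBy {x y : P} (hlt : x < y) (hnc : ¬ x ⋖ y) :
    ¬ (ciGraph P).Adj x y := by
  rintro (h | h | h)
  · exact hnc h
  · exact absurd hlt h.lt.asymm
  · exact h.1 hlt.le

lemma ciGraph_not_adj_of_between {x z : P} (y : P) (h1 : x < y) (h2 : y < z) :
    ¬ (ciGraph P).Adj x z :=
  ciGraph_not_adj_of_lt_not_covBy (h1.trans h2) (fun h => h.2 h1 h2)

lemma ciGraph_not_adj_cases {x y : P} (hne : x ≠ y) (h : ¬ (ciGraph P).Adj x y) :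
    (x < y ∧ ¬ x ⋖ y) ∨ (y < x ∧ ¬ y ⋖ x) := by
  by_cases hle : x ≤ y
  · exact Or.inl ⟨hle.lt_of_ne hne, fun hc => h (Or.inl hc)⟩
  by_cases hle2 : y ≤ x
  · exact Or.inr ⟨hle2.lt_of_ne hne.symm, fun hc => h (Or.inr (Or.inl hc))⟩
  · exact absurd (Or.inr (Or.inr ⟨hle, hle2⟩)) h

lemma ciGraph_no_double_gap_aux (hcog : IsCograph (ciGraph P)) :
    ∀ n : ℕ, ∀ x y z : P, (Set.Ioc x z).ncard ≤ n → x < y → y < z →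
      ¬ x ⋖ y → ¬ y ⋖ z → False := by
  intro n
  induction n with
  | zero =>
    intro x y z hcard hxy hyz _ _
    have hy : y ∈ Set.Ioc x z := ⟨hxy, hyz.le⟩
    have : (Set.Ioc x z).ncard ≠ 0 :=
      Set.ncard_ne_zero_of_mem hy (Set.toFinite _)
    omega
  | succ n ih =>
    intro x y z hcard hxy hyz hc1 hc2
    obtain ⟨a, hxa, hay⟩ := aux_exists_le_covBy hxy
    have hxa' : x < a := hxa.lt_of_ne (by rintro rfl; exact hc1 hay)
    obtain ⟨d, hyd, hdz⟩ := aux_exists_covBy_le hyz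
    have hdz' : d < z := hdz.lt_of_ne (by rintro rfl; exact hc2 hyd)
    by_cases hcov : x ⋖ a
    · -- induced P4 : x - a - y - d
      apply hcog
      have had : a < d := hay.lt.trans hyd.lt
      refine ⟨x, a, y, d, hxa'.ne, hxy.ne, (hxy.trans hyd.lt).ne, hay.lt.ne,
        had.ne, hyd.lt.ne, Or.inl hcov, Or.inl hay, Or.inl hyd, ?_, ?_, ?_⟩
      · exact ciGraph_not_adj_of_lt_not_covBy hxy hc1
      · exact ciGraph_not_adj_of_between a hxa' had
      · exact ciGraph_not_adj_of_between y hay.lt hyd.lt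
    · -- recurse on the smaller triple x < a < d
      have hssub : Set.Ioc x d ⊂ Set.Ioc x z := by
        constructor
        · exact Set.Ioc_subset_Ioc_right hdz'.le
        · intro hsub
          exact absurd ((hsub ⟨hxy.trans hyz, le_rfl⟩).2) hdz'.not_ge
      have hlt : (Set.Ioc x d).ncard < (Set.Ioc x z).ncard :=
        Set.ncard_lt_ncard hssub (Set.toFinite _)
      exact ih x a d (by omega) hxa' (hay.lt.trans hyd.lt) hcov
        (fun h => h.2 hay.lt hyd.lt)

lemma ciGraph_no_double_gap (hcog : IsCograph (ciGraph P)) {x y z : P}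
    (hxy : x < y) (hyz : y < z) (h1 : ¬ x ⋖ y) (h2 : ¬ y ⋖ z) : False :=
  ciGraph_no_double_gap_aux hcog (Set.Ioc x z).ncard x y z le_rfl hxy hyz h1 h2

end AuxCI

/-- In a finite C-I cograph, if a vertex is non-adjacent to two other
(distinct) vertices, then those two vertices are adjacent. -/
theorem CI_cograph_nonadj {V : Type u} [Finite V] (G : SimpleGraph V)
    (hcog : IsCograph G) (hCI : IsCIGraph G)
    (u v w : V) (huv : u ≠ v) (huw : u ≠ w) (hvw : v ≠ w)
    (h1 : ¬ G.Adj u v) (h2 : ¬ G.Adj u w) : G.Adj v w := by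
  obtain ⟨Q, iQ, fQ, ⟨e⟩⟩ := hCI
  letI : PartialOrder Q := iQ
  haveI : Finite Q := fQ
  -- transfer the cograph hypothesis to the C-I graph
  have hcog' : IsCograph (ciGraph Q) := by
    rintro ⟨a, b, c, d, hab, hac, had, hbc, hbd, hcd, e1, e2, e3, n1, n2, n3⟩
    apply hcog
    refine ⟨e.symm a, e.symm b, e.symm c, e.symm d,
      fun h => hab (e.symm.injective h), fun h => hac (e.symm.injective h),
      fun h => had (e.symm.injective h), fun h => hbc (e.symm.injective h),
      fun h => hbd (e.symm.injective h), fun h => hcd (e.symm.injective h),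
      e.symm.map_adj_iff.mpr e1, e.symm.map_adj_iff.mpr e2,
      e.symm.map_adj_iff.mpr e3,
      fun h => n1 (e.symm.map_adj_iff.mp h),
      fun h => n2 (e.symm.map_adj_iff.mp h),
      fun h => n3 (e.symm.map_adj_iff.mp h)⟩
  have h1' : ¬ (ciGraph Q).Adj (e u) (e v) := fun h => h1 (e.map_adj_iff.mp h)
  have h2' : ¬ (ciGraph Q).Adj (e u) (e w) := fun h => h2 (e.map_adj_iff.mp h)
  by_contra hvw'
  have h3' : ¬ (ciGraph Q).Adj (e v) (e w) := fun h => hvw' (e.map_adj_iff.mp h)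
  have c1 := ciGraph_not_adj_cases (fun h => huv (e.injective h)) h1'
  have c2 := ciGraph_not_adj_cases (fun h => huw (e.injective h)) h2'
  have c3 := ciGraph_not_adj_cases (fun h => hvw (e.injective h)) h3'
  rcases c1 with ⟨l1, n1⟩ | ⟨l1, n1⟩ <;> rcases c2 with ⟨l2, n2⟩ | ⟨l2, n2⟩ <;>
    rcases c3 with ⟨l3, n3⟩ | ⟨l3, n3⟩
  · exact ciGraph_no_double_gap hcog' l1 l3 n1 n3
  · exact ciGraph_no_double_gap hcog' l2 l3 n2 n3
  · exact absurd (l3.trans l2) l1.asymm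
  · exact ciGraph_no_double_gap hcog' l2 l1 n2 n1
  · exact ciGraph_no_double_gap hcog' l1 l2 n1 n2
  · exact absurd (l1.trans l2) l3.asymm
  · exact ciGraph_no_double_gap hcog' l3 l2 n3 n2
  · exact ciGraph_no_double_gap hcog' l3 l1 n3 n1
end

section
/- Let G be a finite C-I cograph. Then there exists a poset P which is the disjoint sum P = P_1 + P_2 + ⋯ + P_r of finitely many posets, where each P_i admits a rank function ρ_i : P_i → {0, 1, 2} such that for all x, y ∈ P_i, x < y if and only if ρ_i(x) < ρ_i(y) (i.e., each P_i is a completely ranked poset of rank at most 2), and G is isomorphic to the C-I graph G_P of P. -/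
open SimpleGraph

set_option linter.unusedSectionVars false
namespace CIC

variable {V : Type*} [PartialOrder V]

/-- comparable (below) non-cover pair -/
def Ds (a b : V) : Prop := a < b ∧ ¬ a ⋖ b

def LoP (a : V) : Prop := ∃ b, Ds a b
def HiP (b : V) : Prop := ∃ a, Ds a b

lemma ds_between {a b : V} (h : Ds a b) : ∃ m, a < m ∧ m < b :=
  (not_covBy_iff h.1).1 h.2

lemma ds_of_btw {a m b : V} (h1 : a < m) (h2 : m < b) : Ds a b :=
  ⟨h1.trans h2, fun hc => hc.2 h1 h2⟩

lemma not_adj_of_btw {a m b : V} (h1 : a < m) (h2 : m < b) : ¬ (ciGraph V).Adj a b := by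
  rintro (h | h | h)
  · exact h.2 h1 h2
  · exact absurd (h1.trans h2) h.lt.asymm
  · exact h.1 (h1.trans h2).le

lemma ds_nadj {a b : V} (h : Ds a b) : ¬ (ciGraph V).Adj a b := by
  obtain ⟨m, h1, h2⟩ := ds_between h
  exact not_adj_of_btw h1 h2

lemma nadj_iff {a b : V} (hne : a ≠ b) : ¬ (ciGraph V).Adj a b ↔ (Ds a b ∨ Ds b a) := by
  constructor
  · intro h
    by_cases hab : a ≤ b
    · exact Or.inl ⟨lt_of_le_of_ne hab hne, fun hc => h (Or.inl hc)⟩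
    · by_cases hba : b ≤ a
      · exact Or.inr ⟨lt_of_le_of_ne hba (Ne.symm hne), fun hc => h (Or.inr (Or.inl hc))⟩
      · exact absurd (Or.inr (Or.inr ⟨hab, hba⟩)) h
  · rintro (h | h)
    · exact ds_nadj h
    · exact fun hadj => ds_nadj h hadj.symm

variable [Finite V]

lemma no4 (hcog : IsCograph (ciGraph V)) {a b c d : V}
    (h1 : a < b) (h2 : b < c) (h3 : c < d) : False := by
  obtain ⟨q, hq, hqb⟩ := exists_covBy_le_of_lt h1
  obtain ⟨r, hr, hrc⟩ := exists_covBy_le_of_lt (lt_of_le_of_lt hqb h2)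
  obtain ⟨s, hs, hsd⟩ := exists_covBy_le_of_lt (lt_of_le_of_lt hrc h3)
  exact hcog ⟨a, q, r, s, hq.lt.ne, (hq.lt.trans hr.lt).ne,
    ((hq.lt.trans hr.lt).trans hs.lt).ne, hr.lt.ne, (hr.lt.trans hs.lt).ne, hs.lt.ne,
    Or.inl hq, Or.inl hr, Or.inl hs,
    not_adj_of_btw hq.lt hr.lt, not_adj_of_btw hq.lt (hr.lt.trans hs.lt),
    not_adj_of_btw hr.lt hs.lt⟩

/-- nothing lies strictly below a `Lo` element. -/
lemma lo_lt_false (hcog : IsCograph (ciGraph V)) {x x' : V} (h : LoP x') (hlt : x < x') :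
    False := by
  obtain ⟨y', hd⟩ := h
  obtain ⟨m, hm1, hm2⟩ := ds_between hd
  exact no4 hcog hlt hm1 hm2

/-- nothing lies strictly above a `Hi` element. -/
lemma hi_gt_false (hcog : IsCograph (ciGraph V)) {y y' : V} (h : HiP y) (hlt : y < y') :
    False := by
  obtain ⟨x, hd⟩ := h
  obtain ⟨m, hm1, hm2⟩ := ds_between hd
  exact no4 hcog hm1 hm2 hlt

lemma claimC (hcog : IsCograph (ciGraph V)) {x y x' y' : V}
    (h1 : Ds x y) (h2 : Ds x' y) (h3 : Ds x' y') : Ds x y' := by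
  by_cases hxx : x = x'
  · exact hxx ▸ h3
  by_cases hyy : y = y'
  · exact hyy ▸ h1
  by_contra hno
  -- x ≠ y' :
  have hxy' : x ≠ y' := by
    rintro rfl
    obtain ⟨m, hm1, hm2⟩ := ds_between h3
    obtain ⟨m2, hn1, hn2⟩ := ds_between h1
    exact no4 hcog hm1 hm2 (lt_trans hn1 hn2)
  -- Adjacencies
  have adj_yy' : (ciGraph V).Adj y y' := by
    refine Or.inr (Or.inr ⟨fun hle => ?_, fun hle => ?_⟩)
    · exact hi_gt_false hcog ⟨x, h1⟩ (lt_of_le_of_ne hle hyy)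
    · exact hi_gt_false hcog ⟨x', h3⟩ (lt_of_le_of_ne hle (Ne.symm hyy))
  have adj_y'x : (ciGraph V).Adj y' x := by
    by_cases hle : x ≤ y'
    · have hlt : x < y' := lt_of_le_of_ne hle hxy'
      have hcov : x ⋖ y' := by
        by_contra hc
        exact hno ⟨hlt, hc⟩
      exact Or.inr (Or.inl hcov)
    · by_cases hle2 : y' ≤ x
      · exact absurd (hi_gt_false hcog ⟨x', h3⟩ (lt_of_le_of_ne hle2 (Ne.symm hxy'))) id
      · exact Or.inr (Or.inr ⟨hle2, hle⟩)
  have adj_xx' : (ciGraph V).Adj x x' := by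
    refine Or.inr (Or.inr ⟨fun hle => ?_, fun hle => ?_⟩)
    · exact lo_lt_false hcog ⟨y', h3⟩ (lt_of_le_of_ne hle hxx)
    · exact lo_lt_false hcog ⟨y, h1⟩ (lt_of_le_of_ne hle (Ne.symm hxx))
  exact hcog ⟨y, y', x, x', hyy, h1.1.ne', h2.1.ne', Ne.symm hxy', h3.1.ne', hxx,
    adj_yy', adj_y'x, adj_xx',
    fun h => ds_nadj h1 h.symm, fun h => ds_nadj h2 h.symm, fun h => ds_nadj h3 h.symm⟩
open Classical in
/-- a chosen witness above a `Lo` element -/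
noncomputable def hiW (a : V) : V := if h : LoP a then h.choose else a

lemma hiW_spec {a : V} (h : LoP a) : Ds a (hiW a) := by
  rw [hiW, dif_pos h]; exact h.choose_spec

open Classical in
/-- a chosen middle element for a `Lo` element -/
noncomputable def midW (a : V) : V :=
  if h : LoP a then (ds_between (hiW_spec h)).choose else a

lemma midW_spec {a : V} (h : LoP a) : a < midW a ∧ midW a < hiW a := by
  rw [midW, dif_pos h]; exact (ds_between (hiW_spec h)).choose_spec

def MidP (m : V) : Prop := ∃ a, LoP a ∧ midW a = m

open Classical in
/-- anchor: a chosen `Lo` element for each chosen middle; identity elsewhere -/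
noncomputable def fW (a : V) : V := if h : MidP a then h.choose else a

lemma fW_spec {a : V} (h : MidP a) : LoP (fW a) ∧ midW (fW a) = a := by
  rw [fW, dif_pos h]; exact h.choose_spec

lemma fW_eq_self {a : V} (h : ¬ MidP a) : fW a = a := dif_neg h

open Classical in
/-- the rank function -/
noncomputable def rkW (a : V) : Fin 3 :=
  if LoP a then 0 else if HiP a then 2 else if MidP a then 1 else 0

/-- same (nontrivial) component of the complement relation -/
def S0 (u v : V) : Prop := ∃ x y, Ds x y ∧ (Ds u y ∨ Ds x u) ∧ (Ds v y ∨ Ds x v)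

lemma S0.symm {u v : V} (h : S0 u v) : S0 v u := by
  obtain ⟨x, y, h1, h2, h3⟩ := h; exact ⟨x, y, h1, h3, h2⟩

section withcog
variable (hcog : IsCograph (ciGraph V))
include hcog

lemma mid_not_lo {a m b : V} (h1 : a < m) (_h2 : m < b) (h : LoP m) : False :=
  lo_lt_false hcog h h1

lemma mid_not_hi {a m b : V} (_h1 : a < m) (h2 : m < b) (h : HiP m) : False :=
  hi_gt_false hcog h h2

lemma not_lo_of_hi {a : V} (h : HiP a) : ¬ LoP a := by
  intro hl
  obtain ⟨c, hd⟩ := h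
  obtain ⟨m, hm1, hm2⟩ := ds_between hd
  exact lo_lt_false hcog hl hm2

lemma not_mid_of_lo {a : V} (h : LoP a) : ¬ MidP a := by
  rintro ⟨x, hx, hm⟩
  exact lo_lt_false hcog h ((midW_spec hx).1.trans_eq hm)

lemma not_mid_of_hi {a : V} (h : HiP a) : ¬ MidP a := by
  rintro ⟨x, hx, hm⟩
  exact hi_gt_false hcog h (hm ▸ (midW_spec hx).2)

lemma rk_lo {a : V} (h : LoP a) : rkW a = 0 := by rw [rkW, if_pos h]

lemma rk_hi {a : V} (h : HiP a) : rkW a = 2 := by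
  rw [rkW, if_neg (not_lo_of_hi hcog h), if_pos h]

lemma rk_mid {a : V} (h : MidP a) : rkW a = 1 := by
  obtain ⟨x, hx, hm⟩ := h
  have h1 := (midW_spec hx).1.trans_eq hm
  have h2 := hm ▸ (midW_spec hx).2
  rw [rkW, if_neg (fun hl => lo_lt_false hcog hl h1),
    if_neg (fun hh => hi_gt_false hcog hh h2), if_pos ⟨x, hx, hm⟩]

lemma hi_of_rk_two {a : V} (h : rkW a = 2) : HiP a := by
  by_cases hl : LoP a
  · rw [rk_lo hcog hl] at h; exact absurd h (by decide)
  by_cases hh : HiP a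
  · exact hh
  by_cases hm : MidP a
  · rw [rk_mid hcog hm] at h; exact absurd h (by decide)
  · rw [rkW, if_neg hl, if_neg hh, if_neg hm] at h; exact absurd h (by decide)

lemma not_mid_of_rk_zero {a : V} (h : rkW a = 0) : ¬ MidP a := by
  intro hm; rw [rk_mid hcog hm] at h; exact absurd h (by decide)

lemma not_hi_of_rk_zero {a : V} (h : rkW a = 0) : ¬ HiP a := by
  intro hh; rw [rk_hi hcog hh] at h; exact absurd h (by decide)

/-- membership in a component is stable under changing the reference edge -/
lemma mem_shift {u x y y' : V} (hxy : Ds x y) (hxy' : Ds x y')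
    (hm : Ds u y ∨ Ds x u) : Ds u y' ∨ Ds x u := by
  rcases hm with hm | hm
  · exact Or.inl (claimC hcog hm hxy hxy')
  · exact Or.inr hm

lemma S0_trans {u v w : V} (h1 : S0 u v) (h2 : S0 v w) : S0 u w := by
  obtain ⟨x, y, hxy, hu, hv⟩ := h1
  obtain ⟨x', y', hxy', hv', hw⟩ := h2
  have hkey : Ds x y' := by
    rcases hv with hv | hv <;> rcases hv' with hv' | hv'
    · exact claimC hcog hxy hv hv'
    · exact absurd (lo_lt_false hcog ⟨y, hv⟩ hv'.1) id
    · exact absurd (lo_lt_false hcog ⟨y', hv'⟩ hv.1) id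
    · exact claimC hcog hv hv' hxy'
  refine ⟨x, y', hkey, mem_shift hcog hxy hkey hu, ?_⟩
  rcases hw with hw | hw
  · exact Or.inl hw
  · exact Or.inr (claimC hcog hkey hxy' hw)

/-- the hard direction : the abstract structure forces a non-cover pair -/
lemma ds_of_struct {a b : V} (hS : S0 (fW a) (fW b)) (h0 : rkW a = 0) (h2 : rkW b = 2) :
    Ds a b := by
  have hb_hi : HiP b := hi_of_rk_two hcog h2
  rw [fW_eq_self (not_mid_of_rk_zero hcog h0), fW_eq_self (not_mid_of_hi hcog hb_hi)] at hS
  obtain ⟨x, y, hxy, hu, hv⟩ := hS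
  have hay : Ds a y := hu.resolve_right (fun h => not_hi_of_rk_zero hcog h0 ⟨x, h⟩)
  have hxb : Ds x b := hv.resolve_left
    (fun h => not_lo_of_hi hcog hb_hi ⟨y, h⟩)
  exact claimC hcog hay hxy hxb

/-- the easy direction : a non-cover pair produces the abstract structure -/
lemma struct_of_ds {a b : V} (h : Ds a b) :
    rkW a = 0 ∧ rkW b = 2 ∧ S0 (fW a) (fW b) ∧
      ∃ c, rkW c = 1 ∧ S0 (fW a) (fW c) ∧ S0 (fW c) (fW b) := by
  have hla : LoP a := ⟨b, h⟩
  have hhb : HiP b := ⟨a, h⟩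
  have hfa : fW a = a := fW_eq_self (not_mid_of_lo hcog hla)
  have hfb : fW b = b := fW_eq_self (not_mid_of_hi hcog hhb)
  refine ⟨rk_lo hcog hla, rk_hi hcog hhb, ?_, midW a, rk_mid hcog ⟨a, hla, rfl⟩, ?_, ?_⟩
  · rw [hfa, hfb]; exact ⟨a, b, h, Or.inl h, Or.inr h⟩
  · -- S0 (fW a) (fW (midW a))
    have hmc : MidP (midW a) := ⟨a, hla, rfl⟩
    obtain ⟨hx'lo, hx'mid⟩ := fW_spec hmc
    have h1 : a < midW a := (midW_spec hla).1
    have h2 : midW a < hiW (fW (midW a)) := by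
      have := (midW_spec hx'lo).2; rwa [hx'mid] at this
    have hD : Ds a (hiW (fW (midW a))) := ds_of_btw h1 h2
    rw [hfa]
    exact ⟨a, hiW (fW (midW a)), hD, Or.inl hD, Or.inl (hiW_spec hx'lo)⟩
  · -- S0 (fW (midW a)) (fW b)
    have hmc : MidP (midW a) := ⟨a, hla, rfl⟩
    obtain ⟨hx'lo, hx'mid⟩ := fW_spec hmc
    have h1 : a < midW a := (midW_spec hla).1
    have h2 : midW a < hiW (fW (midW a)) := by
      have := (midW_spec hx'lo).2; rwa [hx'mid] at this
    have hD : Ds a (hiW (fW (midW a))) := ds_of_btw h1 h2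
    rw [hfb]
    exact ⟨a, hiW (fW (midW a)), hD, Or.inl (hiW_spec hx'lo), Or.inr h⟩

end withcog
section order
variable {V : Type*} [PartialOrder V] [Finite V]

lemma tgS0_symm {u v : V} (h : Relation.TransGen S0 u v) : Relation.TransGen S0 v u := by
  induction h with
  | single h => exact Relation.TransGen.single h.symm
  | tail _ h2 ih => exact Relation.TransGen.head h2.symm ih

/-- the new strict order -/
def nlt (a b : V) : Prop := Relation.TransGen S0 (fW a) (fW b) ∧ rkW a < rkW b

/-- the new order -/
def nle (a b : V) : Prop := a = b ∨ nlt a b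

/-- the new partial order: summands are components, order within them given by rank -/
noncomputable def newPO (V : Type*) [PartialOrder V] [Finite V] : PartialOrder V where
  le := nle
  lt := nlt
  le_refl a := Or.inl rfl
  le_trans a b c hab hbc := by
    rcases hab with rfl | ⟨h1, h2⟩
    · exact hbc
    rcases hbc with rfl | ⟨h3, h4⟩
    · exact Or.inr ⟨h1, h2⟩
    · exact Or.inr ⟨h1.trans h3, h2.trans h4⟩
  le_antisymm a b hab hba := by
    rcases hab with rfl | ⟨h1, h2⟩
    · rfl
    rcases hba with rfl | ⟨h3, h4⟩
    · rfl
    · exact absurd (h2.trans h4) (lt_irrefl _)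
  lt_iff_le_not_ge a b := by
    constructor
    · intro h
      refine ⟨Or.inr h, ?_⟩
      rintro (rfl | ⟨h3, h4⟩)
      · exact lt_irrefl _ h.2
      · exact lt_asymm h.2 h4
    · rintro ⟨(rfl | h), hn⟩
      · exact absurd (Or.inl rfl) hn
      · exact h

lemma fin3_ranks : ∀ x y z : Fin 3, x < y → y < z → x = 0 ∧ z = 2 := by decide

/-- the same-summand relation -/
def SameS (a b : V) : Prop := a = b ∨ Relation.TransGen S0 (fW a) (fW b)

lemma sameS_equiv : Equivalence (SameS (V := V)) := by
  refine ⟨fun a => Or.inl rfl, ?_, ?_⟩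
  · rintro a b (rfl | h)
    · exact Or.inl rfl
    · exact Or.inr (tgS0_symm h)
  · rintro a b c (rfl | h1) h2
    · exact h2
    · rcases h2 with rfl | h2
      · exact Or.inr h1
      · exact Or.inr (h1.trans h2)

variable (hcog : IsCograph (ciGraph V))
include hcog

lemma tg_S0 {u v : V} (h : Relation.TransGen S0 u v) : S0 u v := by
  induction h with
  | single h => exact h
  | tail _ h2 ih => exact S0_trans hcog ih h2

lemma dsnew_iff {a b : V} : (@Ds V (newPO V) a b) ↔ Ds a b := by
  constructor
  · rintro ⟨hlt, hnc⟩
    obtain ⟨m, h1, h2⟩ := (@not_covBy_iff V (@Preorder.toLT V (@PartialOrder.toPreorder V (newPO V))) a b hlt).1 hnc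
    have h1' : nlt a m := h1
    have h2' : nlt m b := h2
    have hlt' : nlt a b := hlt
    obtain ⟨h0, h2r⟩ := fin3_ranks _ _ _ h1'.2 h2'.2
    exact ds_of_struct hcog (tg_S0 hcog hlt'.1) h0 h2r
  · intro h
    obtain ⟨h0, h2, hS, c, hc1, hSa, hSc⟩ := struct_of_ds hcog h
    have hac : nlt a c := ⟨Relation.TransGen.single hSa, by rw [h0, hc1]; decide⟩
    have hcb : nlt c b := ⟨Relation.TransGen.single hSc, by rw [hc1, h2]; decide⟩
    have hab : nlt a b := ⟨Relation.TransGen.single hS, by rw [h0, h2]; decide⟩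
    exact ⟨hab, fun hcov => hcov.2 (show @LT.lt V (@Preorder.toLT V (@PartialOrder.toPreorder V (newPO V))) a c from hac)
      (show @LT.lt V (@Preorder.toLT V (@PartialOrder.toPreorder V (newPO V))) c b from hcb)⟩

lemma ciGraph_eq : @ciGraph V (newPO V) = ciGraph V := by
  ext a b
  by_cases hab : a = b
  · subst hab
    exact iff_of_false (SimpleGraph.irrefl _) (SimpleGraph.irrefl _)
  · rw [← not_iff_not, @nadj_iff V (newPO V) a b hab, nadj_iff hab,
      dsnew_iff hcog, dsnew_iff hcog]

end order
end CIC

/-- Every finite C-I cograph is the C-I graph of a poset which is a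
disjoint sum `P = P₁ + ⋯ + P_r` of completely ranked posets of rank at most 2: there are
an index function `idx` (whose fibers are the summands, so that comparable elements lie
in a common fiber) and a rank function `ρ` with values in `{0, 1, 2}` such that within
each fiber `x < y ↔ ρ x < ρ y`. -/
theorem CI_cograph_ranked_poset {V : Type u} [Finite V] (G : SimpleGraph V)
    (hcog : IsCograph G) (hCI : IsCIGraph G) :
    ∃ (W : Type u) (inst : PartialOrder W) (_ : Finite W) (r : ℕ)
      (idx : W → Fin r) (ρ : W → Fin 3),
      (∀ x y : W, x ≤ y → idx x = idx y) ∧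
      (∀ x y : W, idx x = idx y → (x < y ↔ ρ x < ρ y)) ∧
      Nonempty (G ≃g @ciGraph W inst) := by

  obtain ⟨V', instP, finV', ⟨e⟩⟩ := hCI
  haveI := finV'
  have hcog' : IsCograph (ciGraph V') := by
    rintro ⟨a, b, c, d, h1, h2, h3, h4, h5, h6, ha1, ha2, ha3, hn1, hn2, hn3⟩
    exact hcog ⟨e.symm a, e.symm b, e.symm c, e.symm d,
      e.symm.toEquiv.injective.ne h1, e.symm.toEquiv.injective.ne h2,
      e.symm.toEquiv.injective.ne h3, e.symm.toEquiv.injective.ne h4,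
      e.symm.toEquiv.injective.ne h5, e.symm.toEquiv.injective.ne h6,
      e.symm.map_adj_iff.mpr ha1, e.symm.map_adj_iff.mpr ha2, e.symm.map_adj_iff.mpr ha3,
      fun h => hn1 (e.symm.map_adj_iff.mp h), fun h => hn2 (e.symm.map_adj_iff.mp h),
      fun h => hn3 (e.symm.map_adj_iff.mp h)⟩
  let s : Setoid V' := ⟨CIC.SameS, CIC.sameS_equiv⟩
  obtain ⟨r, ⟨eqv⟩⟩ := Finite.exists_equiv_fin (Quotient s)
  refine ⟨V', CIC.newPO V', finV', r, fun x => eqv (Quotient.mk s x), CIC.rkW, ?_, ?_, ?_⟩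
  · intro x y hxy
    rcases (hxy : CIC.nle x y) with rfl | ⟨h1, _⟩
    · rfl
    · exact congrArg eqv (Quotient.sound (Or.inr h1))
  · intro x y hxy
    have hq : Quotient.mk s x = Quotient.mk s y := eqv.injective hxy
    have hsxy : CIC.SameS x y := Quotient.exact hq
    show CIC.nlt x y ↔ CIC.rkW x < CIC.rkW y
    rcases hsxy with rfl | h
    · exact iff_of_false (fun hl => lt_irrefl _ hl.2) (lt_irrefl _)
    · exact ⟨fun hl => hl.2, fun hr => ⟨h, hr⟩⟩
  · rw [CIC.ciGraph_eq hcog']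
    exact ⟨e⟩
end
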